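/- arXiv:0805.4512 — 8 statements merged into one kernel-verified Lean document; each statement's English description precedes it below -/
import Mathlib

section
/- For every integer k ≥ 1, the identity P_k(T)/Q_k(T) = [v_{1,k}T, v_{2,k}T, …, v_{2k,k}T] holds in the field of rational functions ℚ(T); in particular every v_{i,k} (1 ≤ i ≤ 2k) is a nonzero rational number. -/
open Polynomial

noncomputable section

/-- The rational numbers `v_{i,k}`: `v 1 = 2k-1`,
`v (i+1) * v i = (2k-2i-1)(2k-2i+1)/(i(2k-i))` for `1 ≤ i ≤ 2k-1`. -/
def vRat (k : ℕ) : ℕ → ℚ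
  | 0 => 1
  | 1 => 2 * (k : ℚ) - 1
  | j + 2 =>
      ((2 * (k : ℚ) - 2 * ((j : ℚ) + 1) - 1) * (2 * (k : ℚ) - 2 * ((j : ℚ) + 1) + 1) /
          (((j : ℚ) + 1) * (2 * (k : ℚ) - ((j : ℚ) + 1)))) / vRat k (j + 1)

/-- Finite continued fraction `[a_1, …, a_n] = a_1 + 1/[a_2, …, a_n]`. -/
def cfl {K : Type*} [DivisionRing K] : List K → K
  | [] => 0
  | [a] => a
  | a :: b :: t => a + (cfl (b :: t))⁻¹

/-- `P_k(T) = (T²-1)^k ∈ ℚ[T]`. -/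
def PRat (k : ℕ) : Polynomial ℚ := (X ^ 2 - 1) ^ k

/-- `Q_k(T) = ∫₀^T (x²-1)^(k-1) dx = Σ_{i<k} (-1)^(k-1-i) C(k-1,i) (2i+1)⁻¹ T^(2i+1) ∈ ℚ[T]`. -/
def QRat (k : ℕ) : Polynomial ℚ :=
  ∑ i ∈ Finset.range k,
    Polynomial.C ((-1) ^ (k - 1 - i) * (Nat.choose (k - 1) i : ℚ) * (2 * (i : ℚ) + 1)⁻¹) *
      X ^ (2 * i + 1)

section Aux
open Finset

def pe (k m i : ℕ) : ℚ := ∏ j ∈ Finset.range i,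
  (((j:ℚ) - ((k:ℚ) - (m:ℚ))) * (2*(j:ℚ) - (2*(m:ℚ) - 1))) / (((j:ℚ) + 1) * (2*(j:ℚ) + 1))

def po (k m i : ℕ) : ℚ := ∏ j ∈ Finset.range i,
  (((j:ℚ) - ((k:ℚ) - 1 - (m:ℚ))) * (2*(j:ℚ) - (2*(m:ℚ) - 1))) / (((j:ℚ) + 1) * (2*(j:ℚ) + 3))

def gm0 (k m : ℕ) : ℚ := ∏ j ∈ Finset.range m,
  (4*((j:ℚ)+1)*((k:ℚ) - (j:ℚ) - 1)) / ((2*(j:ℚ)+1) * (2*(k:ℚ) - 2*(j:ℚ) - 1))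

lemma pe_zero (k m : ℕ) : pe k m 0 = 1 := by simp [pe]
lemma po_zero (k m : ℕ) : po k m 0 = 1 := by simp [po]
lemma gm0_zero (k : ℕ) : gm0 k 0 = 1 := by simp [gm0]

lemma pe_succ (k m i : ℕ) : pe k m (i+1) = pe k m i *
    ((((i:ℚ) - ((k:ℚ) - (m:ℚ))) * (2*(i:ℚ) - (2*(m:ℚ) - 1))) / (((i:ℚ) + 1) * (2*(i:ℚ) + 1))) :=
  Finset.prod_range_succ _ _

lemma po_succ (k m i : ℕ) : po k m (i+1) = po k m i *
    ((((i:ℚ) - ((k:ℚ) - 1 - (m:ℚ))) * (2*(i:ℚ) - (2*(m:ℚ) - 1))) / (((i:ℚ) + 1) * (2*(i:ℚ) + 3))) :=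
  Finset.prod_range_succ _ _

lemma gm0_succ (k m : ℕ) : gm0 k (m+1) = gm0 k m *
    ((4*((m:ℚ)+1)*((k:ℚ) - (m:ℚ) - 1)) / ((2*(m:ℚ)+1) * (2*(k:ℚ) - 2*(m:ℚ) - 1))) :=
  Finset.prod_range_succ _ _

lemma qne {n : ℤ} (h : n ≠ 0) : (n : ℚ) ≠ 0 := Int.cast_ne_zero.mpr h

lemma kq1 (k m : ℕ) : (2*(k:ℚ) - 2*(m:ℚ) - 1) ≠ 0 := by
  have := qne (n := 2*(k:ℤ) - 2*(m:ℤ) - 1) (by omega)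
  push_cast at this; exact this

lemma kq2 (k m : ℕ) : (2*(k:ℚ) - 4*(m:ℚ) - 3) ≠ 0 := by
  have := qne (n := 2*(k:ℤ) - 4*(m:ℤ) - 3) (by omega)
  push_cast at this; exact this

lemma kq3 (k m : ℕ) (h : m + 2 ≤ k) : ((k:ℚ) - (m:ℚ) - 1) ≠ 0 := by
  have := qne (n := (k:ℤ) - (m:ℤ) - 1) (by omega)
  push_cast at this; exact this

lemma kq4 (k m : ℕ) : (2*(k:ℚ) - 1 - 4*(m:ℚ)) ≠ 0 := by
  have := qne (n := 2*(k:ℤ) - 1 - 4*(m:ℤ)) (by omega)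
  push_cast at this; exact this

lemma gm0_ne (k m : ℕ) (hm : m < k) : gm0 k m ≠ 0 := by
  induction m with
  | zero => simp [gm0_zero]
  | succ m ih =>
    rw [gm0_succ]
    refine mul_ne_zero (ih (by omega)) (div_ne_zero (by
        have h1 : ((k:ℚ) - (m:ℚ) - 1) ≠ 0 := kq3 k m (by omega)
        positivity) (by
        have h2 := kq1 k m
        positivity))

lemma idC (k m : ℕ) : ∀ i : ℕ,
    ((i:ℚ)+1) * pe k (m+1) (i+1) = (2*(m:ℚ)+1) * ((k:ℚ) - 1 - (m:ℚ) - (i:ℚ)) * po k m i := by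
  intro i
  induction i with
  | zero =>
    rw [pe_succ, pe_zero, po_zero]
    push_cast
    field_simp
    ring
  | succ i ih =>
    have h1 : ((i:ℚ)+1) ≠ 0 := by positivity
    have hpe : pe k (m+1) (i+1) = (2*(m:ℚ)+1) * ((k:ℚ) - 1 - (m:ℚ) - (i:ℚ)) * po k m i / ((i:ℚ)+1) := by
      rw [eq_div_iff h1, mul_comm]; exact ih
    rw [pe_succ, po_succ, hpe]
    have h2 : ((i:ℚ)+2) ≠ 0 := by positivity
    have h3 : (2*(i:ℚ)+3) ≠ 0 := by positivity
    have h4 : (2*(i:ℚ)+1) ≠ 0 := by positivity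
    push_cast
    field_simp
    ring

lemma idF (k m : ℕ) (hm : m + 2 ≤ k) : ∀ i : ℕ,
    ((k:ℚ) - (m:ℚ) - 1 - (i:ℚ)) * pe k (m+1) i
      = ((k:ℚ) - (m:ℚ) - 1) * (2*(i:ℚ)+1) * po k (m+1) i := by
  intro i
  induction i with
  | zero =>
    rw [pe_zero, po_zero]; norm_num
  | succ i ih =>
    have hkm := kq3 k m hm
    have h4 : (2*(i:ℚ)+1) ≠ 0 := by positivity
    have hpo : po k (m+1) i
        = ((k:ℚ) - (m:ℚ) - 1 - (i:ℚ)) * pe k (m+1) i / (((k:ℚ) - (m:ℚ) - 1) * (2*(i:ℚ)+1)) := by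
      rw [eq_div_iff (mul_ne_zero hkm h4), mul_comm]; exact ih.symm
    rw [pe_succ, po_succ, hpo]
    have h1 : ((i:ℚ)+1) ≠ 0 := by positivity
    have h3 : (2*(i:ℚ)+3) ≠ 0 := by positivity
    push_cast
    field_simp
    ring

lemma idA (k m : ℕ) : ∀ i : ℕ,
    pe k m (i+1) = -(2*(k:ℚ) - 1 - 4*(m:ℚ)) * po k m i + pe k (m+1) (i+1) := by
  intro i
  induction i with
  | zero =>
    rw [pe_succ, pe_succ, pe_zero, pe_zero, po_zero]
    push_cast
    field_simp
    ring
  | succ i ih =>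
    have h1 : ((i:ℚ)+1) ≠ 0 := by positivity
    have hpe : pe k (m+1) (i+1) = (2*(m:ℚ)+1) * ((k:ℚ) - 1 - (m:ℚ) - (i:ℚ)) * po k m i / ((i:ℚ)+1) := by
      rw [eq_div_iff h1, mul_comm]; exact idC k m i
    rw [pe_succ k m (i+1), po_succ, pe_succ k (m+1) (i+1), ih, hpe]
    have h2 : ((i:ℚ)+2) ≠ 0 := by positivity
    have h3 : (2*(i:ℚ)+3) ≠ 0 := by positivity
    have h4 : (2*(i:ℚ)+1) ≠ 0 := by positivity
    push_cast
    field_simp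
    ring

lemma idB (k m : ℕ) (hm : m + 2 ≤ k) : ∀ i : ℕ,
    (2*(m:ℚ)+1) * (2*(k:ℚ) - 2*(m:ℚ) - 1) * po k m i
      = -(2*(k:ℚ) - 4*(m:ℚ) - 3) * pe k (m+1) i
        + 4*((m:ℚ)+1)*((k:ℚ) - (m:ℚ) - 1) * po k (m+1) i := by
  intro i
  induction i with
  | zero =>
    rw [pe_zero, po_zero, po_zero]; ring
  | succ i ih =>
    have hA : (2*(m:ℚ)+1) * (2*(k:ℚ) - 2*(m:ℚ) - 1) ≠ 0 :=
      mul_ne_zero (by positivity) (kq1 k m)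
    have hkm := kq3 k m hm
    have h4 : (2*(i:ℚ)+1) ≠ 0 := by positivity
    have hpo : po k m i = (-(2*(k:ℚ) - 4*(m:ℚ) - 3) * pe k (m+1) i
        + 4*((m:ℚ)+1)*((k:ℚ) - (m:ℚ) - 1) * po k (m+1) i)
          / ((2*(m:ℚ)+1) * (2*(k:ℚ) - 2*(m:ℚ) - 1)) := by
      rw [eq_div_iff hA, mul_comm]; exact ih
    have hpo2 : po k (m+1) i
        = ((k:ℚ) - (m:ℚ) - 1 - (i:ℚ)) * pe k (m+1) i / (((k:ℚ) - (m:ℚ) - 1) * (2*(i:ℚ)+1)) := by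
      rw [eq_div_iff (mul_ne_zero hkm h4), mul_comm]; exact (idF k m hm i).symm
    rw [po_succ k m i, pe_succ k (m+1) i, po_succ k (m+1) i, hpo, hpo2]
    have h1 : ((i:ℚ)+1) ≠ 0 := by positivity
    have h3 : (2*(i:ℚ)+3) ≠ 0 := by positivity
    have hk1' : (2*((k:ℚ)-(m:ℚ)) - 1) ≠ 0 := by rw [mul_sub]; exact kq1 k m
    push_cast
    field_simp
    ring

lemma vRat_step (k j : ℕ) (h : vRat k (j+1) ≠ 0) :
    vRat k (j+2) =
      ((2 * (k : ℚ) - 2 * ((j : ℚ) + 1) - 1) * (2 * (k : ℚ) - 2 * ((j : ℚ) + 1) + 1) /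
          (((j : ℚ) + 1) * (2 * (k : ℚ) - ((j : ℚ) + 1)))) / vRat k (j + 1) := rfl

lemma vform (k : ℕ) (hk : 1 ≤ k) : ∀ m : ℕ, m + 1 ≤ k →
    vRat k (2*m+1) * gm0 k m = 2*(k:ℚ) - 1 - 4*(m:ℚ) ∧
    vRat k (2*m+2) * ((2*(m:ℚ)+1) * (2*(k:ℚ) - 2*(m:ℚ) - 1)) = gm0 k m * (2*(k:ℚ) - 4*(m:ℚ) - 3) := by
  intro m
  induction m with
  | zero =>
    intro _
    have hk1 : (2*(k:ℚ) - 1) ≠ 0 := by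
      have := qne (n := 2*(k:ℤ) - 1) (by omega); push_cast at this; exact this
    have h3 : vRat k 1 = 2*(k:ℚ) - 1 := rfl
    constructor
    · rw [gm0_zero, show (2*0+1 : ℕ) = 1 from rfl, h3]; push_cast; ring
    · have h1 : vRat k 1 ≠ 0 := by rw [h3]; exact hk1
      have h2 : vRat k 2 = ((2 * (k : ℚ) - 2 * (((0:ℕ) : ℚ) + 1) - 1) * (2 * (k : ℚ) - 2 * (((0:ℕ) : ℚ) + 1) + 1) /
          ((((0:ℕ) : ℚ) + 1) * (2 * (k : ℚ) - (((0:ℕ) : ℚ) + 1)))) / vRat k 1 := vRat_step k 0 h1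
      rw [show (2*0+2 : ℕ) = 2 from rfl, gm0_zero, h2, h3]
      push_cast
      simp only [zero_add]
      field_simp
      ring
  | succ m ih =>
    intro hm
    obtain ⟨hodd, heven⟩ := ih (by omega)
    have hgm := gm0_ne k m (by omega)
    have hgm' := gm0_ne k (m+1) (by omega)
    have hA : (2*(m:ℚ)+1) * (2*(k:ℚ) - 2*(m:ℚ) - 1) ≠ 0 :=
      mul_ne_zero (by positivity) (kq1 k m)
    have hB := kq2 k m
    have hkm := kq3 k m (by omega)
    have hd1 : (2*(k:ℚ) - (2*(m:ℚ)+1+1)) ≠ 0 := by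
      have := qne (n := 2*(k:ℤ) - (2*(m:ℤ)+1+1)) (by omega); push_cast at this; exact this
    have hd2 : (2*(k:ℚ) - (2*(m:ℚ)+2+1)) ≠ 0 := by
      have := qne (n := 2*(k:ℤ) - (2*(m:ℤ)+2+1)) (by omega); push_cast at this; exact this
    have hv2 : vRat k (2*m+2) ≠ 0 := by
      intro h0
      rw [h0, zero_mul] at heven
      exact (mul_ne_zero hgm hB) heven.symm
    have hv2eq : vRat k (2*m+2) = gm0 k m * (2*(k:ℚ) - 4*(m:ℚ) - 3)
        / ((2*(m:ℚ)+1) * (2*(k:ℚ) - 2*(m:ℚ) - 1)) := by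
      rw [eq_div_iff hA]; exact heven
    have hv3eq := vRat_step k (2*m+1) hv2
    rw [show (2*m+1)+2 = 2*m+3 from by omega] at hv3eq
    have goal1 : vRat k (2*m+3) * gm0 k (m+1) = 2*(k:ℚ) - 1 - 4*((m:ℚ)+1) := by
      rw [hv3eq, hv2eq, gm0_succ]
      have hk1' : (2*((k:ℚ)-(m:ℚ)) - 1) ≠ 0 := by rw [mul_sub]; exact kq1 k m
      have hB' : 2*(k:ℚ) - (m:ℚ)*4 - 3 ≠ 0 := by intro h; apply hB; linarith
      push_cast
      field_simp
      ring
    have hv3 : vRat k (2*m+3) ≠ 0 := by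
      intro h0
      rw [h0, zero_mul] at goal1
      have := qne (n := 2*(k:ℤ) - 1 - 4*((m:ℤ)+1)) (by omega)
      push_cast at this
      exact this goal1.symm
    have hv4eq := vRat_step k (2*m+2) hv3
    rw [show (2*m+2)+2 = 2*m+4 from by omega, show (2*m+2)+1 = 2*m+3 from by omega] at hv4eq
    have hv3eq' : vRat k (2*m+3) = (2*(k:ℚ) - 1 - 4*((m:ℚ)+1)) / gm0 k (m+1) := by
      rw [eq_div_iff hgm']; exact goal1
    have hr : (2*(k:ℚ) - 1 - 4*((m:ℚ)+1)) ≠ 0 := by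
      have := qne (n := 2*(k:ℤ) - 1 - 4*((m:ℤ)+1)) (by omega); push_cast at this; exact this
    constructor
    · rw [show 2*(m+1)+1 = 2*m+3 from by omega]; push_cast; exact goal1
    · rw [show 2*(m+1)+2 = 2*m+4 from by omega, hv4eq, hv3eq', gm0_succ]
      have hk1' : (2*((k:ℚ)-(m:ℚ)) - 1) ≠ 0 := by rw [mul_sub]; exact kq1 k m
      have hd2' : 2*(k:ℚ) - (2*((m:ℚ)+1)+1) ≠ 0 := by intro h; apply hd2; linarith
      have hr' : 2*(k:ℚ) - 1 - ((m:ℚ)+1)*4 ≠ 0 := by intro h; apply hr; linarith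
      push_cast
      field_simp
      ring

lemma pe_kk (k i : ℕ) (hi : 1 ≤ i) : pe k k i = 0 := by
  apply Finset.prod_eq_zero (Finset.mem_range.mpr (by omega : 0 < i))
  norm_num

lemma po_last (k i : ℕ) (hk : 1 ≤ k) (hi : 1 ≤ i) : po k (k-1) i = 0 := by
  apply Finset.prod_eq_zero (Finset.mem_range.mpr (by omega : 0 < i))
  have h0 : (((k-1 : ℕ)):ℚ) = (k:ℚ) - 1 := by
    rw [Nat.cast_sub hk]; norm_num
  rw [h0]
  norm_num

lemma po_top (k m : ℕ) (hm : m < k) : po k m k = 0 := by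
  apply Finset.prod_eq_zero (Finset.mem_range.mpr (by omega : k-1-m < k))
  have h0 : (((k-1-m : ℕ)):ℚ) = (k:ℚ) - 1 - (m:ℚ) := by
    have h1 : k-1-m = k - (1+m) := by omega
    rw [h1, Nat.cast_sub (by omega)]; push_cast; ring
  rw [h0]
  norm_num

lemma gm0_kk (k : ℕ) (hk : 1 ≤ k) : gm0 k k = 0 := by
  apply Finset.prod_eq_zero (Finset.mem_range.mpr (by omega : k-1 < k))
  have h0 : (((k-1 : ℕ)):ℚ) = (k:ℚ) - 1 := by rw [Nat.cast_sub hk]; norm_num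
  rw [h0]
  norm_num

lemma choose_cast (n i : ℕ) :
    ((Nat.choose n (i+1) : ℚ)) * ((i:ℚ)+1) = (Nat.choose n i : ℚ) * ((n:ℚ) - (i:ℚ)) := by
  rcases le_or_gt i n with h | h
  · have := Nat.choose_succ_right_eq n i
    have hcast : ((Nat.choose n (i+1) * (i+1) : ℕ) : ℚ) = ((Nat.choose n i * (n - i) : ℕ) : ℚ) := by
      exact_mod_cast congrArg (Nat.cast (R := ℚ)) this
    push_cast [Nat.cast_sub h] at hcast
    linarith [hcast]
  · rw [Nat.choose_eq_zero_of_lt h, Nat.choose_eq_zero_of_lt (by omega)]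
    simp

lemma pe_zero_eq (k i : ℕ) : pe k 0 i = (-1)^i * (Nat.choose k i : ℚ) := by
  induction i with
  | zero => simp [pe_zero]
  | succ i ih =>
    rw [pe_succ, ih]
    have h1 : ((i:ℚ)+1) ≠ 0 := by positivity
    have h4 : (2*(i:ℚ)+1) ≠ 0 := by positivity
    have hc := choose_cast k i
    push_cast
    field_simp
    linear_combination ((-1:ℚ))^i * (2*(i:ℚ)+1) * hc

lemma po_zero_eq (k i : ℕ) (hk : 1 ≤ k) :
    po k 0 i = (-1)^i * (Nat.choose (k-1) i : ℚ) / (2*(i:ℚ)+1) := by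
  induction i with
  | zero => simp [po_zero]
  | succ i ih =>
    rw [po_succ, ih]
    have h1 : ((i:ℚ)+1) ≠ 0 := by positivity
    have h4 : (2*(i:ℚ)+1) ≠ 0 := by positivity
    have h3 : (2*(i:ℚ)+3) ≠ 0 := by positivity
    have hc := choose_cast (k-1) i
    rw [Nat.cast_sub hk] at hc
    push_cast at hc ⊢
    field_simp
    linear_combination ((-1:ℚ))^i * (2*(i:ℚ)+1) * (2*(i:ℚ)+3) * hc

def Epoly (k m : ℕ) : Polynomial ℚ :=
  ∑ i ∈ Finset.range (k+1), C ((-1)^k * pe k m i) * X^(2*i)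

def Opoly (k m : ℕ) : Polynomial ℚ :=
  ∑ i ∈ Finset.range (k+1), C ((-1)^(k+1) * gm0 k m * po k m i) * X^(2*i+1)

lemma Opoly_kk (k : ℕ) (hk : 1 ≤ k) : Opoly k k = 0 := by
  rw [Opoly]
  apply Finset.sum_eq_zero
  intro i _
  rw [gm0_kk k hk]
  simp

lemma Epoly_kk (k : ℕ) (hk : 1 ≤ k) : Epoly k k = C ((-1)^k) := by
  rw [Epoly, Finset.sum_eq_single_of_mem 0 (Finset.mem_range.mpr (by omega))]
  · simp [pe_zero]
  · intro i _ hi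
    rw [pe_kk k i (by omega)]
    simp

lemma Epoly_coeff0 (k m : ℕ) : (Epoly k m).coeff 0 = (-1)^k := by
  rw [Epoly, Polynomial.finset_sum_coeff]
  rw [Finset.sum_eq_single_of_mem 0 (Finset.mem_range.mpr (by omega))]
  · simp [pe_zero]
    rw [show ((-1 : Polynomial ℚ))^k = Polynomial.C ((-1 : ℚ)^k) by
      rw [map_pow, map_neg, map_one], Polynomial.coeff_C]
    norm_num
  · intro i _ hi
    rw [Polynomial.coeff_C_mul, Polynomial.coeff_X_pow]
    simp only [if_neg (by omega : ¬ (0 = 2*i))]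
    ring

lemma Opoly_coeff1 (k m : ℕ) : (Opoly k m).coeff 1 = (-1)^(k+1) * gm0 k m := by
  rw [Opoly, Polynomial.finset_sum_coeff]
  rw [Finset.sum_eq_single_of_mem 0 (Finset.mem_range.mpr (by omega))]
  · simp only [po_zero, mul_one, Nat.mul_zero, Nat.zero_add, pow_one,
      Polynomial.coeff_C_mul, Polynomial.coeff_X_one, mul_one]
  · intro i _ hi
    rw [Polynomial.coeff_C_mul, Polynomial.coeff_X_pow]
    simp only [if_neg (by omega : ¬ (1 = 2*i+1))]
    ring

lemma Epoly_ne (k m : ℕ) : Epoly k m ≠ 0 := by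
  intro h
  have h2 := Epoly_coeff0 k m
  rw [h, Polynomial.coeff_zero] at h2
  exact pow_ne_zero k (by norm_num : (-1:ℚ) ≠ 0) h2.symm

lemma Opoly_ne (k m : ℕ) (hm : m < k) : Opoly k m ≠ 0 := by
  intro h
  have h2 := Opoly_coeff1 k m
  rw [h, Polynomial.coeff_zero] at h2
  exact mul_ne_zero (pow_ne_zero (k+1) (by norm_num : (-1:ℚ) ≠ 0)) (gm0_ne k m hm) h2.symm

lemma Epoly_PRat (k : ℕ) : Epoly k 0 = PRat k := by
  rw [PRat, sub_pow, Epoly]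
  refine Finset.sum_congr rfl (fun i _ => ?_)
  rw [pe_zero_eq]
  rw [show Polynomial.C ((-1:ℚ)^k * ((-1)^i * (Nat.choose k i : ℚ)))
      = (-1)^k * (-1)^i * ((Nat.choose k i : ℕ) : Polynomial ℚ) by
    rw [map_mul, map_mul, map_pow, map_pow, map_neg, map_one, Polynomial.C_eq_natCast]; ring]
  rw [pow_mul]
  ring

lemma Opoly_QRat (k : ℕ) (hk : 1 ≤ k) : Opoly k 0 = QRat k := by
  rw [Opoly, Finset.sum_range_succ, po_top k 0 (by omega), QRat]
  simp only [mul_zero, map_zero, zero_mul, add_zero]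
  refine Finset.sum_congr rfl (fun i hi => ?_)
  have hi' : i ≤ k - 1 := by have := Finset.mem_range.mp hi; omega
  have hs' : ((-1:ℚ))^(k-1-i) = (-1)^(k+1) * (-1)^i := by
    have : ((-1:ℚ))^(k+1) * (-1)^i = (-1)^(k-1-i) := by
      calc ((-1:ℚ))^(k+1) * (-1)^i = (-1:ℚ)^(k+1+i) := (pow_add (-1:ℚ) (k+1) i).symm
      _ = (-1:ℚ)^((k-1-i) + 2*(i+1)) := by congr 1; omega
      _ = (-1:ℚ)^(k-1-i) * ((-1:ℚ)^2)^(i+1) := by rw [pow_add, pow_mul]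
      _ = (-1:ℚ)^(k-1-i) := by norm_num
    exact this.symm
  congr 1
  rw [gm0_zero, po_zero_eq k i hk, hs']
  ring

lemma id1 (k m : ℕ) (hk : 1 ≤ k) (hm : m < k) :
    Epoly k m = C (vRat k (2*m+1)) * X * Opoly k m + Epoly k (m+1) := by
  obtain ⟨hodd, -⟩ := vform k hk m (by omega)
  have key : ∀ i : ℕ, (-1:ℚ)^k * pe k m (i+1)
      = vRat k (2*m+1) * ((-1:ℚ)^(k+1) * gm0 k m * po k m i) + (-1:ℚ)^k * pe k (m+1) (i+1) := by
    intro i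
    have hA := idA k m i
    linear_combination ((-1:ℚ))^k * hA + ((-1:ℚ))^k * po k m i * hodd
  have e3 : C (vRat k (2*m+1)) * X * Opoly k m
      = ∑ i ∈ Finset.range (k+1),
          C (vRat k (2*m+1) * ((-1:ℚ)^(k+1) * gm0 k m * po k m i)) * X^(2*i+2) := by
    rw [Opoly, Finset.mul_sum]
    refine Finset.sum_congr rfl (fun i _ => ?_)
    simp only [map_mul, map_pow, map_neg, map_one]
    ring
  rw [Finset.sum_range_succ, po_top k m hm] at e3
  simp only [mul_zero, map_zero, zero_mul, add_zero] at e3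
  rw [Epoly, Epoly, Finset.sum_range_succ' _ k, Finset.sum_range_succ' _ k, e3]
  have e4 : ∀ i ∈ Finset.range k,
      C ((-1:ℚ)^k * pe k m (i+1)) * X^(2*(i+1))
        = C (vRat k (2*m+1) * ((-1:ℚ)^(k+1) * gm0 k m * po k m i)) * X^(2*i+2)
          + C ((-1:ℚ)^k * pe k (m+1) (i+1)) * X^(2*(i+1)) := by
    intro i _
    rw [key i, map_add, add_mul, show 2*(i+1) = 2*i+2 from by omega]
  rw [Finset.sum_congr rfl e4, Finset.sum_add_distrib, pe_zero, pe_zero]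
  ring

lemma id2 (k m : ℕ) (hk : 1 ≤ k) (hm : m < k) :
    Opoly k m = C (vRat k (2*m+2)) * X * Epoly k (m+1) + Opoly k (m+1) := by
  obtain ⟨-, heven⟩ := vform k hk m (by omega)
  have key2 : ∀ i : ℕ, (-1:ℚ)^(k+1) * gm0 k m * po k m i
      = vRat k (2*m+2) * ((-1:ℚ)^k * pe k (m+1) i)
        + (-1:ℚ)^(k+1) * gm0 k (m+1) * po k (m+1) i := by
    intro i
    rcases le_or_gt (m+2) k with hm2 | hm2
    · have hB := idB k m hm2 i
      have hA : (2*(m:ℚ)+1) * (2*(k:ℚ) - 2*(m:ℚ) - 1) ≠ 0 :=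
        mul_ne_zero (by positivity) (kq1 k m)
      have hgmul : gm0 k (m+1) * ((2*(m:ℚ)+1) * (2*(k:ℚ) - 2*(m:ℚ) - 1))
          = gm0 k m * (4*((m:ℚ)+1)*((k:ℚ) - (m:ℚ) - 1)) := by
        rw [gm0_succ]
        have hk1' : ((k:ℚ)-(m:ℚ))*2 - 1 ≠ 0 := by intro h; apply kq1 k m; linarith
        field_simp
      apply mul_left_cancel₀ hA
      linear_combination ((-1:ℚ))^(k+1) * gm0 k m * hB
        + (-((-1:ℚ))^k * pe k (m+1) i) * heven
        + (-((-1:ℚ))^(k+1) * po k (m+1) i) * hgmul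
    · -- m = k-1
      have hmeq : m = k - 1 := by omega
      have hc : (m:ℚ) = (k:ℚ) - 1 := by
        have : ((m:ℚ)) + 1 = (k:ℚ) := by exact_mod_cast congrArg (Nat.cast (R:=ℚ)) (by omega : m+1 = k)
        linarith
      rcases Nat.eq_zero_or_pos i with hi | hi
      · subst hi
        rw [po_zero, po_zero, pe_zero, show m+1 = k from by omega, gm0_kk k hk]
        rw [hc] at heven
        have h2k : (2*(k:ℚ) - 1) ≠ 0 := by
          have := qne (n := 2*(k:ℤ) - 1) (by omega); push_cast at this; exact this
        apply mul_left_cancel₀ h2k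
        linear_combination (-((-1:ℚ))^k) * heven
      · rw [show m+1 = k from by omega, hmeq, po_last k i hk hi, pe_kk k i hi, gm0_kk k hk]
        ring
  rw [Opoly, Opoly, Epoly, Finset.mul_sum, ← Finset.sum_add_distrib]
  refine Finset.sum_congr rfl (fun i _ => ?_)
  have h5 : C (vRat k (2*m+2)) * X * (C ((-1:ℚ)^k * pe k (m+1) i) * X^(2*i))
      = C (vRat k (2*m+2) * ((-1:ℚ)^k * pe k (m+1) i)) * X^(2*i+1) := by
    simp only [map_mul, map_pow, map_neg, map_one]
    ring
  rw [h5, ← add_mul, ← map_add, ← key2 i]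

lemma cfl_cons {K : Type*} [DivisionRing K] (a : K) (t : List K) (h : t ≠ []) :
    cfl (a :: t) = a + (cfl t)⁻¹ := by
  cases t with
  | nil => exact absurd rfl h
  | cons b t => rfl

lemma cfl_spec {K : Type*} [Field K] : ∀ (n : ℕ) (s a : ℕ → K),
    (∀ j, j ≤ n → s j ≠ 0) → s (n+1) = 0 →
    (∀ j, j < n → s j = a (j+1) * s (j+1) + s (j+2)) →
    cfl ((List.range n).map fun i => a (i+1)) = s 0 / s 1 := by
  intro n
  induction n with
  | zero =>
    intro s a hne h0 _
    have : s 1 = 0 := h0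
    rw [this]
    simp [cfl]
  | succ n ih =>
    intro s a hne h0 hrec
    have hlist : (List.range (n+1)).map (fun i => a (i+1))
        = a 1 :: (List.range n).map (fun i => a (i+2)) := by
      rw [List.range_succ_eq_map, List.map_cons, List.map_map]
      rfl
    have h1 : s 1 ≠ 0 := hne 1 (by omega)
    cases n with
    | zero =>
      rw [hlist]
      have hs0 : s 0 = a 1 * s 1 + s 2 := hrec 0 (by omega)
      have hs2 : s 2 = 0 := h0
      rw [hs2, add_zero] at hs0
      simp only [List.range_zero, List.map_nil]
      show a 1 = s 0 / s 1
      rw [hs0, mul_div_assoc, div_self h1, mul_one]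
    | succ n' =>
      have htail : cfl ((List.range (n'+1)).map fun i => a (i+2)) = s 1 / s 2 :=
        ih (fun j => s (j+1)) (fun i => a (i+1))
          (fun j hj => hne (j+1) (by omega)) h0 (fun j hj => hrec (j+1) (by omega))
      rw [hlist, cfl_cons _ _ (by simp), htail, inv_div]
      have hs0 : s 0 = a 1 * s 1 + s 2 := hrec 0 (by omega)
      rw [hs0]
      field_simp

end Aux

/-- For every `k ≥ 1`, `P_k/Q_k = [v_{1,k} T, …, v_{2k,k} T]` holds in `ℚ(T)`;
in particular every `v_{i,k}` (`1 ≤ i ≤ 2k`) is a nonzero rational number. -/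
theorem statement0 (k : ℕ) (hk : 1 ≤ k) :
    (∀ i, 1 ≤ i → i ≤ 2 * k → vRat k i ≠ 0) ∧
    algebraMap (Polynomial ℚ) (RatFunc ℚ) (PRat k) /
        algebraMap (Polynomial ℚ) (RatFunc ℚ) (QRat k) =
      cfl ((List.range (2 * k)).map fun i => RatFunc.C (vRat k (i + 1)) * RatFunc.X) := by

  constructor
  · intro i h1 h2
    rcases Nat.even_or_odd i with ⟨m, hm⟩ | ⟨m, hm⟩
    · obtain ⟨-, heven⟩ := vform k hk (m-1) (by omega)
      rw [show i = 2*(m-1)+2 from by omega]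
      intro h0
      rw [h0, zero_mul] at heven
      exact (mul_ne_zero (gm0_ne k (m-1) (by omega)) (kq2 k (m-1))) heven.symm
    · obtain ⟨hodd, -⟩ := vform k hk m (by omega)
      rw [show i = 2*m+1 from by omega]
      intro h0
      rw [h0, zero_mul] at hodd
      exact (kq4 k m) hodd.symm
  · set s : ℕ → RatFunc ℚ := fun j =>
      algebraMap (Polynomial ℚ) (RatFunc ℚ)
        (if j % 2 = 0 then Epoly k (j/2) else Opoly k (j/2)) with hs
    have hne : ∀ j, j ≤ 2*k → s j ≠ 0 := by
      intro j hj
      rw [hs]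
      dsimp only
      split_ifs with h
      · exact RatFunc.algebraMap_ne_zero (Epoly_ne k (j/2))
      · exact RatFunc.algebraMap_ne_zero (Opoly_ne k (j/2) (by omega))
    have hz : s (2*k+1) = 0 := by
      rw [hs]
      dsimp only
      rw [if_neg (by omega), show (2*k+1)/2 = k from by omega, Opoly_kk k hk, map_zero]
    have hrec : ∀ j, j < 2*k →
        s j = (RatFunc.C (vRat k (j+1)) * RatFunc.X) * s (j+1) + s (j+2) := by
      intro j hj
      rcases Nat.even_or_odd j with ⟨m, hm⟩ | ⟨m, hm⟩
      · have hj2 : j = 2*m := by omega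
        subst hj2
        rw [hs]
        dsimp only
        rw [if_pos (by omega), if_neg (by omega), if_pos (by omega),
          show (2*m)/2 = m from by omega, show (2*m+1)/2 = m from by omega,
          show (2*m+2)/2 = m+1 from by omega]
        rw [id1 k m hk (by omega)]
        simp [map_add, map_mul, RatFunc.algebraMap_C, RatFunc.algebraMap_X, mul_assoc]
      · have hj2 : j = 2*m+1 := by omega
        subst hj2
        rw [hs]
        dsimp only
        rw [if_neg (by omega), if_pos (by omega), if_neg (by omega),
          show (2*m+1)/2 = m from by omega, show (2*m+1+1)/2 = m+1 from by omega,
          show (2*m+1+2)/2 = m+1 from by omega]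
        rw [id2 k m hk (by omega)]
        simp [map_add, map_mul, RatFunc.algebraMap_C, RatFunc.algebraMap_X, mul_assoc]
    have hmain := cfl_spec (2*k) s (fun i => RatFunc.C (vRat k i) * RatFunc.X) hne hz hrec
    rw [hmain]
    rw [hs]
    dsimp only
    norm_num
    rw [Epoly_PRat k, Opoly_QRat k hk]
end
end

section
/- For every integer k ≥ 1 one has Q_k(1) = −(2kθ_k)^{−1} in ℚ, and the symmetry v_{2k+1−i,k} = v_{i,k}·ω_k^{(−1)^{i+1}} holds for 1 ≤ i ≤ 2k (that is, v_{2k+1−i,k} = v_{i,k}ω_k when i is odd and v_{2k+1−i,k} = v_{i,k}ω_k^{−1} when i is even). -/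
open Polynomial

noncomputable section

/-- `θ_k = (-1)^k 2^(-2k) C(2k,k)`. -/
def thetaRat (k : ℕ) : ℚ := (-1) ^ k * ((2 : ℚ) ^ (2 * k))⁻¹ * (Nat.choose (2 * k) k : ℚ)

/-- `ω_k = -(2kθ_k)⁻²`. -/
def omegaRat (k : ℕ) : ℚ := -((2 * (k : ℚ)) * thetaRat k)⁻¹ ^ 2

def D (m : ℕ) : ℚ := (Nat.centralBinom m : ℚ) / 4 ^ m

lemma D_pos (m : ℕ) : 0 < D m := by
  apply div_pos (by exact_mod_cast m.centralBinom_pos) (by positivity)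

lemma D_ne (m : ℕ) : D m ≠ 0 := (D_pos m).ne'

lemma D_zero : D 0 = 1 := by simp [D, Nat.centralBinom]

lemma Dstep (m : ℕ) : (2 * (m : ℚ) + 2) * D (m + 1) = (2 * m + 1) * D m := by
  have h := Nat.succ_mul_centralBinom_succ m
  have h' : ((m : ℚ) + 1) * (Nat.centralBinom (m + 1) : ℚ)
      = 2 * (2 * m + 1) * (Nat.centralBinom m : ℚ) := by exact_mod_cast h
  simp only [D, pow_succ]
  field_simp
  linear_combination 2 * h'

def A (n m : ℕ) : ℚ :=
  (n.factorial * (2 * m).factorial * (m + n).factorial * 4 ^ n) /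
    (m.factorial * (2 * m + 2 * n + 1).factorial)

lemma fact_ne (n : ℕ) : ((n.factorial : ℚ)) ≠ 0 := by
  exact_mod_cast n.factorial_ne_zero

lemma Arec (n m : ℕ) : A (n + 1) m = A n m - A n (m + 1) := by
  unfold A
  rw [show 2 * m + 2 * (n + 1) + 1 = (2 * m + 2 * n + 1) + 1 + 1 by ring,
      show 2 * (m + 1) + 2 * n + 1 = (2 * m + 2 * n + 1) + 1 + 1 by ring,
      show 2 * (m + 1) = (2 * m) + 1 + 1 by ring,
      show m + (n + 1) = (m + n) + 1 by ring,
      show (m + 1) + n = (m + n) + 1 by ring]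
  rw [Nat.factorial_succ ((2*m+2*n+1)+1), Nat.factorial_succ (2*m+2*n+1),
      Nat.factorial_succ ((2*m)+1), Nat.factorial_succ (2*m),
      Nat.factorial_succ (m+n), Nat.factorial_succ m, Nat.factorial_succ n]
  push_cast
  field_simp
  ring

lemma sumG : ∀ n m : ℕ,
    ∑ i ∈ Finset.range (n + 1),
      (-1 : ℚ) ^ i * (n.choose i : ℚ) * (2 * (i : ℚ) + 2 * (m : ℚ) + 1)⁻¹ = A n m := by
  intro n
  induction n with
  | zero =>
      intro m
      simp only [zero_add, Finset.sum_range_one, A]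
      rw [show 2 * m + 2 * 0 + 1 = (2 * m) + 1 by ring, Nat.factorial_succ]
      push_cast [Nat.choose_self]
      field_simp
      ring
  | succ n ih =>
      intro m
      rw [Finset.sum_range_succ']
      have key : ∀ i : ℕ, (-1 : ℚ) ^ (i+1) * ((n+1).choose (i+1) : ℚ) *
          (2 * ((i:ℚ)+1) + 2 * m + 1)⁻¹
          = (-1:ℚ)^(i+1) * (n.choose (i+1) : ℚ) * (2*((i:ℚ)+1) + 2*m+1)⁻¹
            - (-1:ℚ)^i * (n.choose i : ℚ) * (2*(i:ℚ) + 2*((m:ℚ)+1) + 1)⁻¹ := by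
        intro i
        rw [Nat.choose_succ_succ]
        push_cast
        ring
      push_cast
      rw [Finset.sum_congr rfl (fun i _ => key i), Finset.sum_sub_distrib]
      have e1 : ∑ i ∈ Finset.range (n+1), (-1:ℚ)^(i+1) * (n.choose (i+1):ℚ) *
          (2*((i:ℚ)+1)+2*(m:ℚ)+1)⁻¹ = A n m - (2*(m:ℚ)+1)⁻¹ := by
        have h0 := Finset.sum_range_succ'
          (fun i => (-1:ℚ)^i * (n.choose i:ℚ) * (2*(i:ℚ)+2*(m:ℚ)+1)⁻¹) (n+1)
        have h2 := Finset.sum_range_succ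
          (fun i => (-1:ℚ)^i * (n.choose i:ℚ) * (2*(i:ℚ)+2*(m:ℚ)+1)⁻¹) (n+1)
        simp only [Nat.choose_succ_self, Nat.cast_zero, Nat.cast_ofNat, mul_zero, zero_mul,
          add_zero, Nat.choose_zero_right, Nat.cast_one, pow_zero, one_mul] at h0 h2
        rw [ih m] at h2
        rw [h2] at h0
        push_cast at h0 ⊢
        norm_num at h0
        linarith [h0]
      have e2 : ∑ i ∈ Finset.range (n+1), (-1:ℚ)^i * (n.choose i:ℚ) *
          (2*(i:ℚ)+2*((m:ℚ)+1)+1)⁻¹ = A n (m+1) := by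
        have := ih (m+1)
        push_cast at this
        convert this using 2
      rw [e1, e2, Arec]
      simp only [Nat.choose_zero_right, Nat.cast_one, mul_one]
      ring

lemma A_zero : ∀ n : ℕ, A n 0 * ((2 * (n : ℚ) + 1) * D n) = 1 := by
  intro n
  induction n with
  | zero => simp [A, D_zero]
  | succ n ih =>
      have hD := Dstep n
      have hA : A (n+1) 0 * ((2*(n:ℚ)+3)*(2*(n:ℚ)+2)) = A n 0 * (4*((n:ℚ)+1)^2) := by
        unfold A
        rw [show 2*0+2*(n+1)+1 = (2*0+2*n+1)+1+1 by ring,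
          Nat.factorial_succ ((2*0+2*n+1)+1), Nat.factorial_succ (2*0+2*n+1),
          show 0+(n+1) = (0+n)+1 by ring, Nat.factorial_succ (0+n), Nat.factorial_succ n]
        push_cast
        field_simp
        ring
      have c2 : (2*(n:ℚ)+2) ≠ 0 := by positivity
      have c3 : (2*(n:ℚ)+3) ≠ 0 := by positivity
      have hd' : D (n+1) = (2*(n:ℚ)+1) * D n / (2*(n:ℚ)+2) := by
        field_simp; linear_combination hD
      have ha' : A (n+1) 0 = A n 0 * (4*((n:ℚ)+1)^2) / ((2*(n:ℚ)+3)*(2*(n:ℚ)+2)) := by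
        rw [eq_div_iff (mul_ne_zero c3 c2)]; linear_combination hA
      rw [ha', hd']
      push_cast
      field_simp
      linear_combination (4*(2*(n:ℚ)+3)) * ih

lemma A_inv (n : ℕ) : A n 0 = ((2 * (n : ℚ) + 2) * D (n + 1))⁻¹ := by
  rw [Dstep n]
  exact eq_inv_of_mul_eq_one_left ((mul_comm (A n 0) _ ▸ A_zero n))

lemma theta_eq (k : ℕ) : thetaRat k = (-1) ^ k * D k := by
  unfold thetaRat D
  rw [show ((2:ℚ) ^ (2*k)) = 4 ^ k by rw [pow_mul]; norm_num, Nat.centralBinom]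
  ring

lemma part1 (n : ℕ) : Polynomial.eval (1 : ℚ) (QRat (n+1))
    = -((2 * (((n:ℚ)+1))) * thetaRat (n+1))⁻¹ := by
  have hev : Polynomial.eval (1 : ℚ) (QRat (n+1))
      = ∑ i ∈ Finset.range (n+1), (-1:ℚ) ^ (n - i) * ((n.choose i : ℚ)) * (2*(i:ℚ)+1)⁻¹ := by
    simp [QRat, Polynomial.eval_finset_sum]
  rw [hev]
  have hsign : ∀ i ∈ Finset.range (n+1),
      (-1:ℚ) ^ (n - i) * ((n.choose i : ℚ)) * (2*(i:ℚ)+1)⁻¹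
      = (-1:ℚ)^n * ((-1:ℚ)^i * (n.choose i : ℚ) * (2*(i:ℚ) + 2*((0:ℕ):ℚ) + 1)⁻¹) := by
    intro i hi
    have hin : i ≤ n := by simpa using Nat.lt_succ_iff.mp (Finset.mem_range.mp hi)
    have h : (-1:ℚ) ^ (n - i) * (-1:ℚ) ^ i = (-1:ℚ) ^ n := by
      rw [← pow_add]; congr 1; omega
    have h3 : (-1:ℚ) ^ i * (-1:ℚ) ^ i = 1 := by
      rw [← pow_add]; exact Even.neg_one_pow ⟨i, rfl⟩
    have h2 : (-1:ℚ) ^ (n - i) = (-1:ℚ)^n * (-1:ℚ)^i := by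
      linear_combination ((-1:ℚ)^i) * h - ((-1:ℚ)^(n-i)) * h3
    rw [h2]
    push_cast
    ring
  rw [Finset.sum_congr rfl hsign, ← Finset.mul_sum, sumG n 0, A_inv n]
  have hD := D_ne (n+1)
  have hc : (2*(n:ℚ)+2) ≠ 0 := by positivity
  rw [theta_eq]
  push_cast
  rw [pow_succ]
  obtain ⟨x, hxd⟩ : ∃ x : ℚ, x = (-1:ℚ)^n := ⟨_, rfl⟩
  rw [← hxd]
  have hx2 : x * x = 1 := by
    rw [hxd, ← pow_add]; exact Even.neg_one_pow ⟨n, rfl⟩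
  have hx0 : x ≠ 0 := by
    intro h; rw [h] at hx2; simp at hx2
  field_simp
  linear_combination hx2

def Vodd (k j : ℕ) : ℚ :=
  (2*(k:ℚ) - 4*j - 1) * D j * (2*k) * D k / ((2*(k:ℚ) - 2*j - 1) * D (k - j - 1))

def Veven (k j : ℕ) : ℚ :=
  (2*(k:ℚ) - 4*j - 3) * D (k - j - 1) / ((2*(j:ℚ) + 1) * D j * (2*k) * D k)

lemma vRat_rec (k j : ℕ) : vRat k (j+2) =
    ((2 * (k : ℚ) - 2 * ((j : ℚ) + 1) - 1) * (2 * (k : ℚ) - 2 * ((j : ℚ) + 1) + 1) /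
      (((j : ℚ) + 1) * (2 * (k : ℚ) - ((j : ℚ) + 1)))) / vRat k (j + 1) := rfl

lemma int_ne (a : ℤ) (h : a ≠ 0) : ((a : ℚ)) ≠ 0 := Int.cast_ne_zero.mpr h

lemma odd_ne (k j : ℕ) : (2*(k:ℚ) - 2*(j:ℚ) - 1) ≠ 0 := by
  have h : (2*(k:ℤ) - 2*(j:ℤ) - 1) ≠ 0 := by omega
  intro hq
  have hq' : ((2*(k:ℤ) - 2*(j:ℤ) - 1 : ℤ) : ℚ) = 0 := by push_cast; linarith
  exact h (Int.cast_eq_zero.mp hq')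

set_option maxHeartbeats 2000000 in
lemma v_closed (k : ℕ) (hk : 1 ≤ k) : ∀ j, j + 1 ≤ k →
    vRat k (2*j+1) = Vodd k j ∧ vRat k (2*j+2) = Veven k j := by
  intro j
  induction j with
  | zero =>
      intro hjk
      have hD : (2*(k:ℚ)) * D k = (2*(k:ℚ) - 1) * D (k-1) := by
        have h := Dstep (k-1)
        rw [show k - 1 + 1 = k by omega] at h
        have e : ((k-1 : ℕ) : ℚ) = (k:ℚ) - 1 := by
          rw [Nat.cast_sub hk]; norm_num
        rw [e] at h
        linarith [h]
      have h1 : (2*(k:ℚ) - 1) ≠ 0 := by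
        have := odd_ne k 0; simpa using this
      have hk0 : (k:ℚ) ≠ 0 := Nat.cast_ne_zero.mpr (by omega)
      have hDk : D k = (2*(k:ℚ)-1) * D (k-1) / (2*(k:ℚ)) := by
        field_simp; linear_combination hD
      constructor
      · show vRat k 1 = Vodd k 0
        unfold Vodd
        rw [show vRat k 1 = 2*(k:ℚ) - 1 from rfl]
        push_cast
        rw [D_zero]
        rw [show (k - 0 - 1) = k - 1 by omega]
        rw [hDk]
        field_simp [D_ne]
        rw [eq_div_iff (by intro h; apply h1; linear_combination h)]
        ring
      · show vRat k (0+2) = Veven k 0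
        rw [vRat_rec k 0]
        unfold Veven
        rw [show vRat k 1 = 2*(k:ℚ) - 1 from rfl]
        push_cast
        rw [D_zero]
        rw [show (k - 0 - 1) = k - 1 by omega]
        have hdk1 := D_ne (k-1)
        rw [hDk]
        field_simp
        rw [div_eq_iff (by intro h; apply h1; linear_combination h)]
        ring
  | succ j ih =>
      intro hjk
      have hjk' : j + 1 ≤ k := by omega
      obtain ⟨ho, he⟩ := ih hjk'
      have hne : ∀ a : ℤ, a ≠ 0 → ∀ x : ℚ, ((a : ℤ) : ℚ) = x → x ≠ 0 := by
        intro a ha x hx h0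
        rw [← hx] at h0
        exact ha (Int.cast_eq_zero.mp h0)
      have n1 : (2*(j:ℚ)+1) ≠ 0 := by positivity
      have n2 : (2*(j:ℚ)+2) ≠ 0 := by positivity
      have n3 : (2*(k:ℚ)-2*(j:ℚ)-2) ≠ 0 :=
        hne (2*(k:ℤ)-2*(j:ℤ)-2) (by omega) _ (by push_cast; ring)
      have n4 : (2*(k:ℚ)-2*(j:ℚ)-3) ≠ 0 :=
        hne (2*(k:ℤ)-2*(j:ℤ)-3) (by omega) _ (by push_cast; ring)
      have n5 : (2*(k:ℚ)-4*(j:ℚ)-3) ≠ 0 :=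
        hne (2*(k:ℤ)-4*(j:ℤ)-3) (by omega) _ (by push_cast; ring)
      have n6 : (2*(k:ℚ)-4*(j:ℚ)-5) ≠ 0 :=
        hne (2*(k:ℤ)-4*(j:ℤ)-5) (by omega) _ (by push_cast; ring)
      have n7 : (2*(k:ℚ)-2*(j:ℚ)-1) ≠ 0 := odd_ne k j
      have n8 : (2*(k:ℚ)-4*(j:ℚ)-1) ≠ 0 :=
        hne (2*(k:ℤ)-4*(j:ℤ)-1) (by omega) _ (by push_cast; ring)
      have n9 : (2*(k:ℚ)) ≠ 0 := by
        have : (k:ℚ) ≠ 0 := Nat.cast_ne_zero.mpr (by omega); simpa using this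
      have hD1 : (2*(j:ℚ)+2) * D (j+1) = (2*(j:ℚ)+1) * D j := Dstep j
      have hD2 : (2*(k:ℚ)-2*(j:ℚ)-2) * D (k-j-1) = (2*(k:ℚ)-2*(j:ℚ)-3) * D (k-j-2) := by
        have h := Dstep (k-j-2)
        rw [show k - j - 2 + 1 = k - j - 1 by omega] at h
        have e : ((k-j-2 : ℕ) : ℚ) = (k:ℚ) - (j:ℚ) - 2 := by
          rw [show k-j-2 = k-(j+2) by omega, Nat.cast_sub hjk]; push_cast; ring
        rw [e] at h
        linear_combination h
      have ny1 : (2*(j:ℚ)+1+1) ≠ 0 := by positivity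
      have ny2 : (2*(k:ℚ) - (2*(j:ℚ)+1+1)) ≠ 0 :=
        hne (2*(k:ℤ)-2*(j:ℤ)-2) (by omega) _ (by push_cast; ring)
      have ny3 : (2*(j:ℚ)+2+1) ≠ 0 := by positivity
      have ny4 : (2*(k:ℚ) - (2*(j:ℚ)+2+1)) ≠ 0 :=
        hne (2*(k:ℤ)-2*(j:ℤ)-3) (by omega) _ (by push_cast; ring)
      have nz3 : (2*(j:ℚ)+3) ≠ 0 := by positivity
      have n6' : (2*(k:ℚ)-4*(j:ℚ)-7) ≠ 0 :=
        hne (2*(k:ℤ)-4*(j:ℤ)-7) (by omega) _ (by push_cast; ring)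
      have dneL : (2*(k:ℚ) - 2*(((j:ℕ)+1 : ℕ):ℚ) - 1) * D (k-j-2) ≠ 0 :=
        mul_ne_zero (hne (2*(k:ℤ)-2*(j:ℤ)-3) (by omega) _ (by push_cast; ring)) (D_ne _)
      have hVo2 : Vodd k (j+1) =
          (2*(k:ℚ)-4*(j:ℚ)-5) * ((2*(j:ℚ)+1) * D j) * (2*(k:ℚ)) * D k /
            ((2*(j:ℚ)+2) * ((2*(k:ℚ)-2*(j:ℚ)-2) * D (k-j-1))) := by
        unfold Vodd
        rw [show k - (j+1) - 1 = k - j - 2 by omega,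
          div_eq_div_iff dneL (mul_ne_zero n2 (mul_ne_zero n3 (D_ne _)))]
        push_cast
        linear_combination ((2*(k:ℚ)-4*(j:ℚ)-5) * (2*(k:ℚ)) * D k *
            ((2*(k:ℚ)-2*(j:ℚ)-2) * D (k-j-1))) * hD1 +
          ((2*(k:ℚ)-4*(j:ℚ)-5) * (2*(k:ℚ)) * D k * ((2*(j:ℚ)+1) * D j)) * hD2
      have dneL2 : (2*(((j:ℕ)+1 : ℕ):ℚ)+1) * D ((j:ℕ)+1) * (2*(k:ℚ)) * D k ≠ 0 :=
        mul_ne_zero (mul_ne_zero (mul_ne_zero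
          (hne (2*(j:ℤ)+3) (by omega) _ (by push_cast; ring)) (D_ne _)) n9) (D_ne _)
      have hVe2 : Veven k (j+1) =
          (2*(k:ℚ)-4*(j:ℚ)-7) * ((2*(k:ℚ)-2*(j:ℚ)-2) * D (k-j-1)) * (2*(j:ℚ)+2) /
            ((2*(k:ℚ)-2*(j:ℚ)-3) * (2*(j:ℚ)+3) * ((2*(j:ℚ)+1) * D j) *
              (2*(k:ℚ)) * D k) := by
        unfold Veven
        rw [show k - (j+1) - 1 = k - j - 2 by omega,
          div_eq_div_iff dneL2 (mul_ne_zero (mul_ne_zero (mul_ne_zero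
            (mul_ne_zero n4 nz3) (mul_ne_zero n1 (D_ne _))) n9) (D_ne _))]
        push_cast
        linear_combination (-(2*(k:ℚ)-4*(j:ℚ)-7) * (2*(j:ℚ)+3) * (2*(k:ℚ)) * D k *
            ((2*(k:ℚ)-2*(j:ℚ)-2) * D (k-j-1))) * hD1 -
          ((2*(k:ℚ)-4*(j:ℚ)-7) * (2*(j:ℚ)+3) * (2*(k:ℚ)) * D k *
            ((2*(j:ℚ)+1) * D j)) * hD2
      have hVe' : vRat k (2*j+2) = (2*(k:ℚ) - 4*(j:ℚ) - 3) * D (k-j-1) /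
          ((2*(j:ℚ)+1) * D j * (2*(k:ℚ)) * D k) := by
        rw [he]; unfold Veven; push_cast; ring
      have hodd : vRat k (2*(j+1)+1) = Vodd k (j+1) := by
        rw [show 2*(j+1)+1 = (2*j+1)+2 by omega, vRat_rec k (2*j+1),
            show (2*j+1)+1 = 2*j+2 by omega, hVe', hVo2]
        push_cast
        field_simp [ny1, ny2, n1, n2, n3, n4, n5, n9,
          D_ne j, D_ne k, D_ne (k-j-1)]
        rw [div_eq_div_iff (by intro h; apply n5; linear_combination h)
          (by intro h; apply n3; linear_combination 2 * h)]
        ring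
      refine ⟨hodd, ?_⟩
      rw [show 2*(j+1)+2 = (2*j+2)+2 by omega, vRat_rec k (2*j+2),
          show (2*j+2)+1 = 2*(j+1)+1 by omega, hodd, hVo2, hVe2]
      have hpu : (2*(k:ℚ)-4*(j:ℚ)-5) * ((2*(j:ℚ)+1) * D j) * (2*(k:ℚ)) * D k /
          ((2*(j:ℚ)+2) * ((2*(k:ℚ)-2*(j:ℚ)-2) * D (k-j-1))) ≠ 0 :=
        div_ne_zero (mul_ne_zero (mul_ne_zero
            (mul_ne_zero n6 (mul_ne_zero n1 (D_ne _))) n9) (D_ne _))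
          (mul_ne_zero n2 (mul_ne_zero n3 (D_ne _)))
      have hYa : (((2*j+2 : ℕ) : ℚ) + 1) ≠ 0 :=
        hne (2*(j:ℤ)+3) (by omega) _ (by push_cast; ring)
      have hYb : (2*(k:ℚ) - (((2*j+2 : ℕ) : ℚ) + 1)) ≠ 0 :=
        hne (2*(k:ℤ)-2*(j:ℤ)-3) (by omega) _ (by push_cast; ring)
      have wne : (2*(k:ℚ)-2*(j:ℚ)-3) * (2*(j:ℚ)+3) * ((2*(j:ℚ)+1) * D j) *
          (2*(k:ℚ)) * D k ≠ 0 :=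
        mul_ne_zero (mul_ne_zero (mul_ne_zero (mul_ne_zero n4 nz3)
          (mul_ne_zero n1 (D_ne _))) n9) (D_ne _)
      have une : (2*(j:ℚ)+2) * ((2*(k:ℚ)-2*(j:ℚ)-2) * D (k-j-1)) ≠ 0 :=
        mul_ne_zero n2 (mul_ne_zero n3 (D_ne _))
      rw [div_eq_iff hpu, div_mul_div_comm,
        div_eq_div_iff (mul_ne_zero hYa hYb) (mul_ne_zero wne une)]
      push_cast
      ring

lemma omega_eq (k : ℕ) : omegaRat k = -(((2*(k:ℚ)) * D k)^2)⁻¹ := by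
  have h : ((-1:ℚ)^k)^2 = 1 := by
    rw [← pow_mul, mul_comm, pow_mul]; norm_num
  unfold omegaRat
  rw [theta_eq, inv_pow]
  congr 1
  congr 1
  linear_combination ((2*(k:ℚ)) * D k)^2 * h

lemma v_symm (k : ℕ) (hk : 1 ≤ k) : ∀ i, 1 ≤ i → i ≤ 2*k →
    vRat k (2*k+1-i) = vRat k i * omegaRat k ^ ((-1:ℤ)^(i+1)) := by
  intro i h1 h2
  have hne : ∀ a : ℤ, a ≠ 0 → ∀ x : ℚ, ((a : ℤ) : ℚ) = x → x ≠ 0 := by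
    intro a ha x hx h0
    rw [← hx] at h0
    exact ha (Int.cast_eq_zero.mp h0)
  rcases Nat.even_or_odd i with he | ho
  · obtain ⟨j, hj⟩ : ∃ j, i = 2*j+2 := by
      obtain ⟨c, hc⟩ := he; exact ⟨c-1, by omega⟩
    subst hj
    have hjk : j + 1 ≤ k := by omega
    rw [show 2*k+1-(2*j+2) = 2*(k-j-1)+1 by omega,
      (v_closed k hk (k-j-1) (by omega)).1, (v_closed k hk j hjk).2,
      show ((-1:ℤ)^(2*j+2+1)) = -1 from Odd.neg_one_pow ⟨j+1, by ring⟩,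
      zpow_neg_one, omega_eq, inv_neg, inv_inv]
    unfold Vodd Veven
    rw [show k - (k-j-1) - 1 = j by omega]
    have e : ((k-j-1 : ℕ) : ℚ) = (k:ℚ) - (j:ℚ) - 1 := by
      rw [show k-j-1 = k-(j+1) by omega, Nat.cast_sub hjk]; push_cast; ring
    rw [e]
    have m1 : (2*((k:ℚ)-(j:ℚ)-1)+1) ≠ 0 :=
      hne (2*(k:ℤ)-2*(j:ℤ)-1) (by omega) _ (by push_cast; ring)
    have m2 : (2*(k:ℚ) - 2*((k:ℚ)-(j:ℚ)-1) - 1) ≠ 0 :=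
      hne (2*(j:ℤ)+1) (by omega) _ (by push_cast; ring)
    have m3 : (2*(j:ℚ)+1) ≠ 0 := by positivity
    have m9 : (2*(k:ℚ)) ≠ 0 := by
      have : (k:ℚ) ≠ 0 := Nat.cast_ne_zero.mpr (by omega); simpa using this
    field_simp [m1, m2, m3, m9, D_ne j, D_ne k, D_ne (k-j-1)]
    rw [div_eq_iff (by intro h; apply m3; linear_combination h)]
    ring
  · obtain ⟨j, hj⟩ := ho
    subst hj
    have hjk : j + 1 ≤ k := by omega
    rw [show 2*k+1-(2*j+1) = 2*(k-j-1)+2 by omega,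
      (v_closed k hk (k-j-1) (by omega)).2, (v_closed k hk j hjk).1,
      show ((-1:ℤ)^(2*j+1+1)) = 1 from Even.neg_one_pow ⟨j+1, by ring⟩,
      zpow_one, omega_eq]
    unfold Vodd Veven
    rw [show k - (k-j-1) - 1 = j by omega]
    have e : ((k-j-1 : ℕ) : ℚ) = (k:ℚ) - (j:ℚ) - 1 := by
      rw [show k-j-1 = k-(j+1) by omega, Nat.cast_sub hjk]; push_cast; ring
    rw [e]
    have m1 : (2*((k:ℚ)-(j:ℚ)-1)+1) ≠ 0 :=
      hne (2*(k:ℤ)-2*(j:ℤ)-1) (by omega) _ (by push_cast; ring)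
    have m2 : (2*(k:ℚ) - 2*(j:ℚ) - 1) ≠ 0 :=
      hne (2*(k:ℤ)-2*(j:ℤ)-1) (by omega) _ (by push_cast; ring)
    have m3 : (2*(j:ℚ)+1) ≠ 0 := by positivity
    have m9 : (2*(k:ℚ)) ≠ 0 := by
      have : (k:ℚ) ≠ 0 := Nat.cast_ne_zero.mpr (by omega); simpa using this
    field_simp [m1, m2, m3, m9, D_ne j, D_ne k, D_ne (k-j-1)]
    rw [← neg_div, eq_div_iff (by intro h; apply m2; linear_combination h)]
    ring

/-- For every `k ≥ 1`, `Q_k(1) = -(2kθ_k)⁻¹` and `v_{2k+1-i,k} = v_{i,k} ω_k^((-1)^(i+1))`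
for `1 ≤ i ≤ 2k`. -/
theorem statement1 (k : ℕ) (hk : 1 ≤ k) :
    Polynomial.eval (1 : ℚ) (QRat k) = -((2 * (k : ℚ)) * thetaRat k)⁻¹ ∧
    ∀ i, 1 ≤ i → i ≤ 2 * k →
      vRat k (2 * k + 1 - i) = vRat k i * omegaRat k ^ ((-1 : ℤ) ^ (i + 1)) := by
  obtain ⟨n, rfl⟩ : ∃ n, k = n+1 := ⟨k-1, by omega⟩
  refine ⟨?_, v_symm (n+1) (by omega)⟩
  have h := part1 n
  push_cast at h ⊢
  exact h
end
end

section
/- Let p be an odd prime, t ≥ 1, r = p^t and k ∈ E(r). Then for every integer i with 1 ≤ i ≤ 2k−1, the p-adic valuations satisfy v_p(i) = v_p(2k−2i+1) and v_p(2k−i) = v_p(2k−2i−1). -/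
open Polynomial

noncomputable section

set_option maxHeartbeats 1000000

private theorem key_val (p : ℕ) (hp : p.Prime) (l : ℕ) (A C : ℤ)
    (hsum : (p:ℤ)^l ∣ A + C)
    (hA : ¬ (p:ℤ)^(l+1) ∣ A) (hC : ¬ (p:ℤ)^(l+1) ∣ C) :
    padicValInt p A = padicValInt p C := by
  haveI : Fact p.Prime := ⟨hp⟩
  have hA0 : A ≠ 0 := by rintro rfl; exact hA (dvd_zero _)
  have hC0 : C ≠ 0 := by rintro rfl; exact hC (dvd_zero _)
  have hdvd : ∀ n : ℕ, ((p:ℤ)^n ∣ A ↔ (p:ℤ)^n ∣ C) := by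
    intro n
    rcases le_or_gt n l with hn | hn
    · have h1 : (p:ℤ)^n ∣ A + C := (pow_dvd_pow _ hn).trans hsum
      constructor
      · intro h; have := dvd_sub h1 h; simpa using this
      · intro h; have := dvd_sub h1 h; simpa using this
    · constructor
      · intro h; exact absurd ((pow_dvd_pow _ hn).trans h) hA
      · intro h; exact absurd ((pow_dvd_pow _ hn).trans h) hC
  have h1 := (padicValInt_dvd_iff (padicValInt p A) C).mp ((hdvd _).mp (padicValInt_dvd _))
  have h2 := (padicValInt_dvd_iff (padicValInt p C) A).mp ((hdvd _).mpr (padicValInt_dvd _))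
  rcases h1 with h1|h1
  · exact absurd h1 hC0
  rcases h2 with h2|h2
  · exact absurd h2 hA0
  exact le_antisymm h1 h2

private theorem val_two_mul (p : ℕ) (hp : p.Prime) (hodd : p ≠ 2) (x : ℤ) (hx : x ≠ 0) :
    padicValInt p (2 * x) = padicValInt p x := by
  haveI : Fact p.Prime := ⟨hp⟩
  rw [padicValInt.mul (by norm_num) hx]
  have h0 : padicValInt p 2 = 0 := by
    apply padicValInt.eq_zero_of_not_dvd
    intro h
    have := Int.le_of_dvd (by norm_num) h
    have := hp.two_le
    omega
  omega

private theorem val_neg (p : ℕ) (x : ℤ) : padicValInt p (-x) = padicValInt p x := by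
  simp [padicValInt]


/-- `k ∈ E(r)` for `r = p^t`: `k = m p^l + (p^l - 1)/2`, `1 ≤ m ≤ (p-1)/2`, `0 ≤ l ≤ t-1`. -/
def memE (p t k : ℕ) : Prop :=
  ∃ m l : ℕ, 1 ≤ m ∧ m ≤ (p - 1) / 2 ∧ l ≤ t - 1 ∧ k = m * p ^ l + (p ^ l - 1) / 2

/-- Let `p` be an odd prime, `r = p^t`, `k ∈ E(r)`. For `1 ≤ i ≤ 2k-1` one has
`v_p(i) = v_p(2k-2i+1)` and `v_p(2k-i) = v_p(2k-2i-1)` (p-adic valuations of integers). -/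
theorem statement2 (p t : ℕ) (hp : p.Prime) (hodd : p ≠ 2) (ht : 1 ≤ t)
    (k : ℕ) (hk : memE p t k) :
    ∀ i : ℕ, 1 ≤ i → i ≤ 2 * k - 1 →
      padicValInt p (i : ℤ) = padicValInt p (2 * (k : ℤ) - 2 * i + 1) ∧
      padicValInt p (2 * (k : ℤ) - i) = padicValInt p (2 * (k : ℤ) - 2 * i - 1) := by
  obtain ⟨m, l, hm1, hm2, hl, hkeq⟩ := hk
  haveI : Fact p.Prime := ⟨hp⟩
  have hp2 : 2 ≤ p := hp.two_le
  have hpo : Odd p := hp.odd_of_ne_two hodd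
  have hpon : p % 2 = 1 := Nat.odd_iff.mp hpo
  obtain ⟨s, hs⟩ : Odd (p ^ l) := hpo.pow
  have hpl1 : 1 ≤ p ^ l := Nat.one_le_pow _ _ (by omega)
  have hks : k = m * p ^ l + s := by rw [hkeq]; congr 1; omega
  have hsZ : ((p:ℤ))^l = 2 * s + 1 := by exact_mod_cast hs
  have hkZ : (k:ℤ) = m * (p:ℤ)^l + s := by exact_mod_cast hks
  have hNZ : (2:ℤ) * k + 1 = (2 * m + 1) * (p:ℤ)^l := by rw [hkZ]; linear_combination -hsZ
  have hcle : (2*(m:ℤ)+1) ≤ p := by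
    have : 2*m+1 ≤ p := by omega
    exact_mod_cast this
  have hplpos : (0:ℤ) < (p:ℤ)^l := by positivity
  have hpow : (2*(m:ℤ)+1) * (p:ℤ)^l ≤ (p:ℤ)^(l+1) := by
    rw [pow_succ]
    nlinarith [mul_le_mul_of_nonneg_right hcle (le_of_lt hplpos)]
  have hcop2 : IsCoprime ((p:ℤ)) 2 := by
    have h := Nat.isCoprime_iff_coprime.mpr (Nat.coprime_two_right.mpr hpo)
    exact_mod_cast h
  have hcopn : ∀ n:ℕ, IsCoprime ((p:ℤ)^n) 2 := fun n => IsCoprime.pow_left hcop2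
  intro i hi1 hi2
  have hk1 : 1 ≤ k := by
    have : 1*1 ≤ m * p^l := Nat.mul_le_mul hm1 hpl1
    omega
  have hiZ1 : (1:ℤ) ≤ i := by exact_mod_cast hi1
  have hiZ2 : (i:ℤ) ≤ 2*(k:ℤ) - 1 := by omega
  have hIb : (i:ℤ) ≤ (2*m+1)*(p:ℤ)^l - 2 := by linarith
  -- first claim
  have A1 : ¬ (p:ℤ)^(l+1) ∣ 2*(i:ℤ) := by
    intro h
    have h' : (p:ℤ)^(l+1) ∣ (i:ℤ) := (hcopn (l+1)).dvd_of_dvd_mul_left h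
    have := Int.le_of_dvd (by omega) h'
    linarith
  have C1 : ¬ (p:ℤ)^(l+1) ∣ (2*(k:ℤ) - 2*i + 1) := by
    intro h
    have hCeq : 2*(k:ℤ) - 2*i + 1 = (2*m+1)*(p:ℤ)^l - 2*i := by linarith
    have h0 : (p:ℤ)^l ∣ 2*(i:ℤ) := by
      have h1 : (p:ℤ)^l ∣ (2*(m:ℤ)+1)*(p:ℤ)^l - 2*i := by
        rw [← hCeq]; exact (pow_dvd_pow _ (by omega)).trans h
      have h2 : (p:ℤ)^l ∣ (2*(m:ℤ)+1)*(p:ℤ)^l := Dvd.intro_left _ rfl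
      have := dvd_sub h2 h1; simpa using this
    obtain ⟨j, hj⟩ := (hcopn l).dvd_of_dvd_mul_left h0
    have hj1 : 1 ≤ j := by nlinarith
    have hjlt : (p:ℤ)^l * j < (p:ℤ)^l * (2*m+1) := by nlinarith
    have hjc : j ≤ 2*(m:ℤ) := by
      have := lt_of_mul_lt_mul_left hjlt (le_of_lt hplpos)
      omega
    have hCfac : 2*(k:ℤ) - 2*i + 1 = (p:ℤ)^l * ((2*m+1) - 2*j) := by rw [hCeq, hj]; ring
    have hpd : (p:ℤ) ∣ ((2*(m:ℤ)+1) - 2*j) := by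
      have hd : (p:ℤ)^l * (p:ℤ) ∣ (p:ℤ)^l * ((2*(m:ℤ)+1)-2*j) := by
        rw [← pow_succ, ← hCfac]; exact h
      exact (mul_dvd_mul_iff_left (ne_of_gt hplpos)).mp hd
    have hne : (2*(m:ℤ)+1) - 2*j ≠ 0 := by omega
    have habs : |(2*(m:ℤ)+1) - 2*j| ≤ 2*m - 1 := by rw [abs_le]; omega
    have hple := Int.le_of_dvd (abs_pos.mpr hne) ((dvd_abs _ _).mpr hpd)
    have hmp : (2:ℤ)*m + 1 ≤ p := hcle
    linarith
  have g1 : padicValInt p ((i:ℤ)) = padicValInt p (2*(k:ℤ) - 2*i + 1) := by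
    rw [← val_two_mul p hp hodd i (by omega)]
    apply key_val p hp l
    · have he : 2*(i:ℤ) + (2*(k:ℤ) - 2*i + 1) = (2*m+1)*(p:ℤ)^l := by linarith
      rw [he]; exact Dvd.intro_left _ rfl
    · exact A1
    · exact C1
  -- second claim
  have A2 : ¬ (p:ℤ)^(l+1) ∣ 2*(2*(k:ℤ) - i) := by
    intro h
    have h' : (p:ℤ)^(l+1) ∣ (2*(k:ℤ) - i) := (hcopn (l+1)).dvd_of_dvd_mul_left h
    have := Int.le_of_dvd (by omega) h'
    linarith
  have C2 : ¬ (p:ℤ)^(l+1) ∣ -(2*(k:ℤ) - 2*i - 1) := by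
    rw [dvd_neg]
    intro h
    have hne : 2*(k:ℤ) - 2*i - 1 ≠ 0 := by omega
    have habs : |2*(k:ℤ) - 2*i - 1| ≤ 2*(k:ℤ) - 1 := by rw [abs_le]; omega
    have hple := Int.le_of_dvd (abs_pos.mpr hne) ((dvd_abs _ _).mpr h)
    linarith
  have g2main := key_val p hp l (2*(2*(k:ℤ)-i)) (-(2*(k:ℤ)-2*i-1))
      (by
        have he : 2*(2*(k:ℤ)-i) + -(2*(k:ℤ)-2*i-1) = (2*m+1)*(p:ℤ)^l := by linarith
        rw [he]; exact Dvd.intro_left _ rfl)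
      A2 C2
  have g2 : padicValInt p (2*(k:ℤ) - i) = padicValInt p (2*(k:ℤ) - 2*i - 1) := by
    rw [← val_two_mul p hp hodd (2*(k:ℤ)-i) (by omega), g2main, val_neg]
  exact ⟨g1, g2⟩
end
end

section
/- Let p be an odd prime, t ≥ 1, r = p^t and k ∈ E(r). Then the p-adic valuation of the rational number v_{i,k} is zero for every i with 1 ≤ i ≤ 2k. -/
open Polynomial

noncomputable section

lemma padicValInt_neg' (p : ℕ) (z : ℤ) : padicValInt p (-z) = padicValInt p z := by
  simp [padicValInt]

lemma padicValInt_pow_mul' (p : ℕ) [Fact p.Prime] (s : ℕ) {x : ℤ}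
    (hx : ¬ (p : ℤ) ∣ x) : padicValInt p ((p : ℤ) ^ s * x) = s := by
  have hx0 : x ≠ 0 := by rintro rfl; exact hx (dvd_zero _)
  have hp0 : ((p : ℤ)) ^ s ≠ 0 := pow_ne_zero _ (by exact_mod_cast (Fact.out : p.Prime).ne_zero)
  rw [padicValInt.mul hp0 hx0, padicValInt.eq_zero_of_not_dvd hx]
  have : ((p : ℤ)) ^ s = ((p ^ s : ℕ) : ℤ) := by push_cast; ring
  rw [this, padicValInt.of_nat, padicValNat.prime_pow]
  omega

lemma core' (p : ℕ) [Fact p.Prime] (hodd : Odd (p : ℤ)) {N c : ℤ} {s : ℕ}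
    (hc0 : 0 < c) (hcp : c < (p : ℤ)) (hcodd : Odd c) (hN : N = c * (p : ℤ) ^ s)
    {a : ℤ} (ha : Odd a) (haN : |a| < N) :
    padicValInt p (N - a) = padicValInt p a := by
  have hpnat : p.Prime := Fact.out
  have ha0 : a ≠ 0 := by rintro rfl; simp at ha
  have habs := abs_lt.mp haN
  by_cases hdvd : (p : ℤ) ^ s ∣ a
  · obtain ⟨a', rfl⟩ := hdvd
    have hps0 : (0:ℤ) < (p:ℤ) ^ s := pow_pos (by exact_mod_cast hpnat.pos) _
    have ha'0 : a' ≠ 0 := by rintro rfl; simp at ha0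
    have hpso : Odd ((p:ℤ) ^ s) := hodd.pow
    have ha'odd : Odd a' := by
      rcases Int.even_or_odd a' with h | h
      · exact absurd (h.mul_left _) (Int.not_even_iff_odd.mpr ha)
      · exact h
    have ha'c : |a'| < c := by
      have : (p:ℤ) ^ s * |a'| < c * (p:ℤ)^s := by
        calc (p:ℤ) ^ s * |a'| = |(p:ℤ)^s * a'| := by
              rw [abs_mul, abs_of_pos hps0]
          _ < N := haN
          _ = c * (p:ℤ)^s := hN
      nlinarith [abs_nonneg a']
    have hpa' : ¬ (p : ℤ) ∣ a' := by
      intro hd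
      have := Int.le_of_dvd (abs_pos.mpr ha'0) ((dvd_abs _ _).mpr hd)
      omega
    have hsub : N - (p:ℤ)^s * a' = (p:ℤ)^s * (c - a') := by rw [hN]; ring
    have hca'pos : 0 < c - a' := by have := (abs_lt.mp ha'c).2; omega
    have hca'even : Even (c - a') := hcodd.sub_odd ha'odd
    have hpca' : ¬ (p : ℤ) ∣ (c - a') := by
      intro hd
      have h2 : (2:ℤ) ∣ (c - a') := hca'even.two_dvd
      have hcop : IsCoprime (2:ℤ) (p:ℤ) := by
        refine (Int.prime_two.coprime_iff_not_dvd).mpr ?_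
        intro h
        obtain ⟨e, he⟩ := h
        exact (Int.not_even_iff_odd.mpr hodd) ⟨e, by omega⟩
      have h2p : (2 * (p:ℤ)) ∣ (c - a') := hcop.mul_dvd h2 hd
      have := Int.le_of_dvd hca'pos h2p
      have := (abs_lt.mp ha'c).1
      omega
    rw [hsub, padicValInt_pow_mul' p s hpca', padicValInt_pow_mul' p s hpa']
  · set v := padicValInt p a with hv
    have hvs : v < s := by
      by_contra h
      exact hdvd ((padicValInt_dvd_iff s a).mpr (Or.inr (by omega)))
    have hNa0 : N - a ≠ 0 := by omega
    have hpvN : (p:ℤ) ^ (v + 1) ∣ N := by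
      rw [hN]
      exact Dvd.dvd.mul_left (pow_dvd_pow _ (by omega)) c
    have hdva : (p:ℤ) ^ v ∣ a := padicValInt_dvd a
    have h1 : (p:ℤ) ^ v ∣ N - a :=
      dvd_sub (dvd_trans (pow_dvd_pow _ (by omega)) hpvN) hdva
    have h2 : ¬ (p:ℤ) ^ (v + 1) ∣ N - a := by
      intro h
      have hdd : (p:ℤ) ^ (v+1) ∣ a := by
        have := dvd_sub hpvN h
        simpa using this
      rcases (padicValInt_dvd_iff (v+1) a).mp hdd with h' | h'
      · exact ha0 h'
      · omega
    have hle : v ≤ padicValInt p (N - a) := by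
      rcases (padicValInt_dvd_iff v (N - a)).mp h1 with h' | h'
      · exact absurd h' hNa0
      · exact h'
    have hge : padicValInt p (N - a) ≤ v := by
      by_contra h
      exact h2 ((padicValInt_dvd_iff (v+1) (N-a)).mpr (Or.inr (by omega)))
    omega

/-- Let `p` be an odd prime, `r = p^t`, `k ∈ E(r)`. Then the `p`-adic valuation of the
(nonzero) rational number `v_{i,k}` is zero for `1 ≤ i ≤ 2k`. -/
theorem statement3 (p t : ℕ) (hp : p.Prime) (hodd : p ≠ 2) (ht : 1 ≤ t)
    (k : ℕ) (hk : memE p t k) :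
    ∀ i, 1 ≤ i → i ≤ 2 * k → vRat k i ≠ 0 ∧ padicValRat p (vRat k i) = 0 := by
  haveI : Fact p.Prime := ⟨hp⟩
  obtain ⟨m, l, hm1, hm2, hl, hkeq⟩ := hk
  have hpodd : Odd p := hp.odd_of_ne_two hodd
  have hp2 : p % 2 = 1 := Nat.odd_iff.mp hpodd
  have hp3 : 3 ≤ p := by have := hp.two_le; omega
  have hplodd : p ^ l % 2 = 1 := Nat.odd_iff.mp (hpodd.pow)
  have hk1 : 1 ≤ k := by
    have h0 : 0 < m * p ^ l := Nat.mul_pos hm1 (pow_pos hp.pos l)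
    omega
  have h2k : 2 * k + 1 = (2 * m + 1) * p ^ l := by
    have hr : (2 * m + 1) * p ^ l = 2 * (m * p ^ l) + p ^ l := by ring
    omega
  have hmp : 2 * m + 1 ≤ p := by omega
  obtain ⟨c, s, hc0, hcp, hcodd, hN⟩ :
      ∃ (c : ℤ) (s : ℕ), 0 < c ∧ c < (p:ℤ) ∧ Odd c ∧ (2*(k:ℤ)+1) = c * (p:ℤ)^s := by
    rcases eq_or_lt_of_le hmp with he | hlt
    · refine ⟨1, l + 1, one_pos, by exact_mod_cast hp.one_lt, odd_one, ?_⟩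
      have hh : 2 * k + 1 = p ^ (l + 1) := by rw [h2k, ← he]; ring
      rw [one_mul]
      exact_mod_cast congrArg (Nat.cast : ℕ → ℤ) hh
    · refine ⟨2 * (m:ℤ) + 1, l, by positivity, by exact_mod_cast hlt,
        ⟨(m:ℤ), by ring⟩, ?_⟩
      exact_mod_cast congrArg (Nat.cast : ℕ → ℤ) h2k
  have key : ∀ a : ℤ, Odd a → |a| < 2*(k:ℤ)+1 →
      padicValInt p (2*(k:ℤ)+1 - a) = padicValInt p a := by
    intro a ha haN
    exact core' p (by exact_mod_cast hpodd) hc0 hcp hcodd hN ha haN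
  have valI2 : padicValInt p 2 = 0 := by
    apply padicValInt.eq_zero_of_not_dvd
    intro h
    have := Int.le_of_dvd (by norm_num) h
    omega
  have hmul2 : ∀ x : ℤ, x ≠ 0 → padicValInt p (2 * x) = padicValInt p x := by
    intro x hx
    rw [padicValInt.mul two_ne_zero hx, valI2, zero_add]
  intro i hi1
  induction i, hi1 using Nat.le_induction with
  | base =>
    intro _
    have hb : vRat k 1 = ((2 * (k:ℤ) - 1 : ℤ) : ℚ) := by
      simp only [vRat]; push_cast; ring
    have hne : (2 * (k:ℤ) - 1) ≠ 0 := by omega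
    constructor
    · rw [hb]; exact_mod_cast hne
    · rw [hb, padicValRat.of_int]
      have h := key (2 * (k:ℤ) - 1) ⟨(k:ℤ) - 1, by ring⟩
        (abs_lt.mpr ⟨by omega, by omega⟩)
      have h2 : 2*(k:ℤ)+1 - (2 * (k:ℤ) - 1) = 2 := by ring
      rw [h2] at h
      omega
  | succ n hn ih =>
    intro hsucc
    obtain ⟨ihne, ihval⟩ := ih (by omega)
    obtain ⟨j, rfl⟩ : ∃ j, n = j + 1 := ⟨n - 1, by omega⟩
    have hjk : j + 1 + 1 ≤ 2 * k := hsucc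
    have hre : vRat k (j + 1 + 1) =
        (((2*(k:ℤ) - 2*((j:ℤ)+1) - 1) * (2*(k:ℤ) - 2*((j:ℤ)+1) + 1) : ℤ) : ℚ) /
          ((((j:ℤ)+1) * (2*(k:ℤ) - ((j:ℤ)+1)) : ℤ) : ℚ) / vRat k (j + 1) := by
      show vRat k (j + 2) = _
      simp only [vRat]
      push_cast
      ring
    have hBne : (2*(k:ℤ) - 2*((j:ℤ)+1) - 1) ≠ 0 := by omega
    have hAne : (2*(k:ℤ) - 2*((j:ℤ)+1) + 1) ≠ 0 := by omega
    have hIne : ((j:ℤ)+1) ≠ 0 := by omega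
    have hDne : (2*(k:ℤ) - ((j:ℤ)+1)) ≠ 0 := by omega
    have hA := key (2*(k:ℤ) - 2*((j:ℤ)+1) + 1) ⟨(k:ℤ) - ((j:ℤ)+1), by ring⟩
      (abs_lt.mpr ⟨by omega, by omega⟩)
    have hNA : 2*(k:ℤ)+1 - (2*(k:ℤ) - 2*((j:ℤ)+1) + 1) = 2 * ((j:ℤ)+1) := by ring
    rw [hNA, hmul2 _ hIne] at hA
    have hB := key (-(2*(k:ℤ) - 2*((j:ℤ)+1) - 1)) ⟨((j:ℤ)+1) - (k:ℤ), by ring⟩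
      (abs_lt.mpr ⟨by omega, by omega⟩)
    have hNB : 2*(k:ℤ)+1 - (-(2*(k:ℤ) - 2*((j:ℤ)+1) - 1)) = 2 * (2*(k:ℤ) - ((j:ℤ)+1)) := by
      ring
    rw [hNB, hmul2 _ hDne, padicValInt_neg'] at hB
    have hnumne : ((2*(k:ℤ) - 2*((j:ℤ)+1) - 1) * (2*(k:ℤ) - 2*((j:ℤ)+1) + 1)) ≠ 0 :=
      mul_ne_zero hBne hAne
    have hdenne : (((j:ℤ)+1) * (2*(k:ℤ) - ((j:ℤ)+1))) ≠ 0 := mul_ne_zero hIne hDne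
    have hnumQ : (((2*(k:ℤ) - 2*((j:ℤ)+1) - 1) * (2*(k:ℤ) - 2*((j:ℤ)+1) + 1) : ℤ) : ℚ) ≠ 0 :=
      Int.cast_ne_zero.mpr hnumne
    have hdenQ : ((((j:ℤ)+1) * (2*(k:ℤ) - ((j:ℤ)+1)) : ℤ) : ℚ) ≠ 0 :=
      Int.cast_ne_zero.mpr hdenne
    constructor
    · rw [hre]
      exact div_ne_zero (div_ne_zero hnumQ hdenQ) ihne
    · rw [hre, padicValRat.div (div_ne_zero hnumQ hdenQ) ihne,
        padicValRat.div hnumQ hdenQ, ihval, padicValRat.of_int, padicValRat.of_int,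
        padicValInt.mul hBne hAne, padicValInt.mul hIne hDne]
      omega
end
end

section
/- Let p be an odd prime, t ≥ 1, r = p^t and k ∈ E(r). Then for every integer i with 0 ≤ i ≤ 2k one has s_p(i) + s_p(2k−i) = s_p(2k), where s_p(n) denotes the sum of the base-p digits of n; consequently p does not divide the binomial coefficient C(2k,i) for 0 ≤ i ≤ 2k. -/
open Polynomial

noncomputable section

lemma sumdig_rec {p : ℕ} (hp : 2 ≤ p) (n : ℕ) :
    (Nat.digits p n).sum = n % p + (Nat.digits p (n / p)).sum := by
  rcases Nat.eq_zero_or_pos n with h | h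
  · simp [h]
  · rw [Nat.digits_eq_cons_digits_div hp h.ne']; simp

lemma sumdig_single {p x : ℕ} (hp : 2 ≤ p) (hx : x < p) :
    (Nat.digits p x).sum = x := by
  rw [sumdig_rec hp, Nat.mod_eq_of_lt hx, Nat.div_eq_of_lt hx]
  simp

/-- digit sum of complement within `p^l`. -/
lemma sumdig_compl {p : ℕ} (hp : 2 ≤ p) :
    ∀ l s : ℕ, s < p ^ l →
      (Nat.digits p s).sum + (Nat.digits p (p ^ l - 1 - s)).sum = l * (p - 1) := by
  intro l
  induction l with
  | zero =>
    intro s hs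
    rw [pow_zero] at hs
    have : s = 0 := by omega
    subst this; simp
  | succ l ih =>
    intro s hs
    have hd : s % p < p := Nat.mod_lt _ (by omega)
    have hs' : s / p < p ^ l := by
      apply Nat.div_lt_of_lt_mul
      rw [← pow_succ']
      exact hs
    have hpl : 1 ≤ p ^ l := Nat.one_le_pow _ _ (by omega)
    have key : p ^ (l + 1) - 1 - s = (p - 1 - s % p) + p * (p ^ l - 1 - s / p) := by
      have h1 : s = p * (s / p) + s % p := (Nat.div_add_mod s p).symm.trans (by ring)
      have h2 : p ^ (l + 1) = p * p ^ l := by rw [pow_succ]; ring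
      have h3 : p * (p ^ l - 1 - s / p) = p * p ^ l - p * 1 - p * (s / p) := by
        rw [Nat.mul_sub, Nat.mul_sub]
      have h4 : p * (s / p) + p * 1 ≤ p * p ^ l := by
        rw [← Nat.mul_add]
        exact Nat.mul_le_mul_left _ (by omega)
      omega
    rw [key, sumdig_rec hp s]
    have hlt : p - 1 - s % p < p := by omega
    rw [sumdig_rec hp ((p - 1 - s % p) + p * (p ^ l - 1 - s / p))]
    rw [Nat.add_mul_mod_self_left, Nat.add_mul_div_left _ _ (by omega : 0 < p),
      Nat.mod_eq_of_lt hlt, Nat.div_eq_of_lt hlt, Nat.zero_add]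
    have hih := ih (s / p) hs'
    have hmul : (l + 1) * (p - 1) = l * (p - 1) + (p - 1) := by ring
    omega

/-- digit sum splits at `p^l`. -/
lemma sumdig_split {p : ℕ} (hp : 2 ≤ p) :
    ∀ l q s : ℕ, s < p ^ l →
      (Nat.digits p (q * p ^ l + s)).sum = (Nat.digits p q).sum + (Nat.digits p s).sum := by
  intro l
  induction l with
  | zero =>
    intro q s hs
    rw [pow_zero] at hs
    have : s = 0 := by omega
    subst this; simp
  | succ l ih =>
    intro q s hs
    have hs' : s / p < p ^ l := by
      apply Nat.div_lt_of_lt_mul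
      rw [← pow_succ']
      exact hs
    have key : q * p ^ (l + 1) + s = s % p + p * (q * p ^ l + s / p) := by
      have h1 : s = p * (s / p) + s % p := (Nat.div_add_mod s p).symm.trans (by ring)
      have h2 : q * p ^ (l + 1) = p * (q * p ^ l) := by rw [pow_succ]; ring
      have h3 : p * (q * p ^ l + s / p) = p * (q * p ^ l) + p * (s / p) := by ring
      omega
    rw [key, sumdig_rec hp, Nat.add_mul_mod_self_left,
      Nat.add_mul_div_left _ _ (by omega : 0 < p),
      Nat.mod_eq_of_lt (Nat.mod_lt _ (by omega)),
      Nat.div_eq_of_lt (Nat.mod_lt _ (by omega)), Nat.zero_add,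
      ih q (s / p) hs', sumdig_rec hp s]
    omega

/-- Let `p` be an odd prime, `r = p^t`, `k ∈ E(r)`. For `0 ≤ i ≤ 2k` one has
`s_p(i) + s_p(2k-i) = s_p(2k)` (sums of base-`p` digits); consequently `p ∤ C(2k,i)`. -/
theorem statement4 (p t : ℕ) (hp : p.Prime) (hodd : p ≠ 2) (ht : 1 ≤ t)
    (k : ℕ) (hk : memE p t k) :
    ∀ i, i ≤ 2 * k →
      (Nat.digits p i).sum + (Nat.digits p (2 * k - i)).sum = (Nat.digits p (2 * k)).sum ∧
      ¬ p ∣ Nat.choose (2 * k) i := by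
  obtain ⟨m, l, hm1, hm2, hl, hkeq⟩ := hk
  have hp2 : 2 ≤ p := hp.two_le
  have hp3 : 3 ≤ p := by
    rcases Nat.lt_or_ge p 3 with h | h
    · interval_cases p <;> simp_all
    · exact h
  have hplodd : Odd (p ^ l) := (hp.odd_of_ne_two hodd).pow
  have hpl : 1 ≤ p ^ l := Nat.one_le_pow _ _ (by omega)
  have hhalf : 2 * ((p ^ l - 1) / 2) = p ^ l - 1 := by
    obtain ⟨c, hc⟩ := hplodd
    omega
  have h2m : 2 * m ≤ p - 1 := by omega
  have hn : 2 * k = 2 * (m * p ^ l) + (p ^ l - 1) := by omega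
  have hn' : 2 * k = (2 * m) * p ^ l + (p ^ l - 1) := by
    rw [hn]; ring
  -- digit sum of n
  have hsn : (Nat.digits p (2 * k)).sum = 2 * m + l * (p - 1) := by
    rw [hn', sumdig_split hp2 l (2 * m) (p ^ l - 1) (by omega),
      sumdig_single hp2 (by omega)]
    have := sumdig_compl hp2 l 0 (by omega)
    simp at this
    omega
  intro i hi
  obtain ⟨q, s, hsi, hiqs⟩ : ∃ q s, s < p ^ l ∧ i = q * p ^ l + s :=
    ⟨i / p ^ l, i % p ^ l, Nat.mod_lt _ (by omega), by
      rw [Nat.mul_comm]; exact (Nat.div_add_mod i (p ^ l)).symm⟩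
  have hq2m : q ≤ 2 * m := by
    have h1 : q * p ^ l ≤ i := by omega
    by_contra h
    have h2 : 2 * m + 1 ≤ q := by omega
    have h3 : (2 * m + 1) * p ^ l ≤ q * p ^ l := Nat.mul_le_mul_right _ h2
    have h4 : (2 * m + 1) * p ^ l = 2 * (m * p ^ l) + p ^ l := by ring
    omega
  have hsub : 2 * k - i = (2 * m - q) * p ^ l + (p ^ l - 1 - s) := by
    have h1 : (2 * m - q) * p ^ l + q * p ^ l = 2 * (m * p ^ l) := by
      rw [← Nat.add_mul, show 2 * m - q + q = 2 * m from by omega, Nat.mul_assoc]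
    omega
  have hmain : (Nat.digits p i).sum + (Nat.digits p (2 * k - i)).sum
      = (Nat.digits p (2 * k)).sum := by
    rw [hsub, hiqs, sumdig_split hp2 l q s hsi,
      sumdig_split hp2 l (2 * m - q) (p ^ l - 1 - s) (by omega),
      sumdig_single hp2 (show q < p by omega),
      sumdig_single hp2 (show 2 * m - q < p by omega), hsn]
    have := sumdig_compl hp2 l s hsi
    omega
  refine ⟨hmain, ?_⟩
  haveI : Fact p.Prime := ⟨hp⟩
  have hkummer := sub_one_mul_padicValNat_choose_eq_sub_sum_digits (p := p) hi
  rw [hmain] at hkummer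
  simp only [Nat.sub_self] at hkummer
  have hv : padicValNat p (Nat.choose (2 * k) i) = 0 := by
    rcases Nat.mul_eq_zero.mp hkummer with h | h
    · omega
    · exact h
  intro hdvd
  have hpos : 0 < Nat.choose (2 * k) i := Nat.choose_pos hi
  have := one_le_padicValNat_of_dvd hpos.ne' hdvd
  omega
end
end

section
/- Let p be an odd prime, q = p^s, r = p^t, k ∈ E(r) and l ≥ 1. Let (λ_n)_{n≥1} and (δ_n)_{n≥0} be sequences in F_q* satisfying (LD): λ_{f(n)} = ε_1^{(−1)^n} λ_n^r and λ_{f(n)+i} = −v_{i,k} ε_1^{(−1)^{n+i}} δ_n^{(−1)^i} for n ≥ 1 and 1 ≤ i ≤ 2k (for a fixed ε_1 ∈ F_q*). Then (δ_n) satisfies (D_1): δ_n = 2kθ_k^{i(n)}λ_n^r − (ω_kδ_{n−1})^{−1} for all n ≥ 1, if and only if the following three conditions hold: (II_0) δ_n = 2kθ_kλ_n^r + (2kθ_k)²δ_{n−1}^{−1} for 1 ≤ n ≤ l (equivalently δ_n = 2kθ_k[λ_n^r,…,λ_1^r, δ_0/(2kθ_k)]); (D_2) δ_{f(n)} + (ω_kδ_{f(n)−1})^{−1}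 = θ_k ε_1^{r(−1)^n}(δ_n^r + (ω_kδ_{n−1})^{−r}) for all n ≥ 1; and (D_3) δ_{f(n)+i} + (ω_kδ_{f(n)+i−1})^{−1} = −2kθ_k v_{i,k} ε_1^{r(−1)^{n+i}} δ_n^{r(−1)^i} for all n ≥ 1 and 1 ≤ i ≤ 2k. -/
open Polynomial

noncomputable section

/-- `f(n) = (2k+1) n + l - 2k`. -/
def fIdx (k l n : ℕ) : ℕ := (2 * k + 1) * n + l - 2 * k

/-- `i(n) = 1` if `n` is not of the form `f(m)` with `m ≥ 1`, and `i(f(n)) = i(n) + 1`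
(for `k ≥ 1`, `l ≥ 1`, the unique `m ≥ 1` with `f(m) = n` is `(n + 2k - l)/(2k+1) < n`). -/
def iIdx (k l : ℕ) : ℕ → ℕ
  | n =>
    if h : 1 ≤ (n + 2 * k - l) / (2 * k + 1) ∧
        fIdx k l ((n + 2 * k - l) / (2 * k + 1)) = n ∧
        (n + 2 * k - l) / (2 * k + 1) < n then
      iIdx k l ((n + 2 * k - l) / (2 * k + 1)) + 1
    else 1
  termination_by n => n
  decreasing_by exact h.2.2

/-- `θ_k` viewed in a field of characteristic `p` (reduction mod `p`). -/
def thF (Fq : Type*) [Field Fq] (k : ℕ) : Fq := (thetaRat k : Fq)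

/-- `ω_k` viewed in a field of characteristic `p` (reduction mod `p`). -/
def omF (Fq : Type*) [Field Fq] (k : ℕ) : Fq := (omegaRat k : Fq)

/-- `v_{i,k}` viewed in a field of characteristic `p` (reduction mod `p`). -/
def vF (Fq : Type*) [Field Fq] (k i : ℕ) : Fq := (vRat k i : Fq)

lemma iIdx_eq_one (k l n : ℕ) (h : ∀ m, 1 ≤ m → fIdx k l m ≠ n) : iIdx k l n = 1 := by
  rw [iIdx, dif_neg]
  rintro ⟨h1, h2, h3⟩
  exact h _ h1 h2

lemma mul_expand (k m : ℕ) (hm : 1 ≤ m) :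
    (2*k+1) * m = m + 2*k*m ∧ 2*k ≤ 2*k*m := by
  constructor
  · ring
  · nlinarith

lemma fIdx_lt (k l m : ℕ) (hl : 1 ≤ l) (hm : 1 ≤ m) : m < fIdx k l m := by
  obtain ⟨h1, h2⟩ := mul_expand k m hm
  unfold fIdx; omega

lemma iIdx_fIdx (k l m : ℕ) (hl : 1 ≤ l) (hm : 1 ≤ m) :
    iIdx k l (fIdx k l m) = iIdx k l m + 1 := by
  obtain ⟨h1, h2⟩ := mul_expand k m hm
  have key : (fIdx k l m + 2 * k - l) = (2*k+1) * m := by unfold fIdx; omega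
  rw [iIdx, key, Nat.mul_div_cancel_left _ (by omega)]
  rw [dif_pos ⟨hm, rfl, fIdx_lt k l m hl hm⟩]

lemma not_fIdx_of_le (k l n : ℕ) (hn : n ≤ l) (m : ℕ) (hm : 1 ≤ m) : fIdx k l m ≠ n := by
  obtain ⟨h1, h2⟩ := mul_expand k m hm
  unfold fIdx; omega

lemma not_fIdx_add (k l m i : ℕ) (hk : 1 ≤ k) (hm : 1 ≤ m) (hi : 1 ≤ i) (hik : i ≤ 2*k)
    (m' : ℕ) (hm' : 1 ≤ m') : fIdx k l m' ≠ fIdx k l m + i := by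
  obtain ⟨h1, h2⟩ := mul_expand k m hm
  obtain ⟨h3, h4⟩ := mul_expand k m' hm'
  unfold fIdx
  intro h
  have hA : (2*k+1) * m' = (2*k+1) * m + i := by omega
  rcases le_or_gt m' m with hle | hlt
  · have h5 : (2*k+1)*m' ≤ (2*k+1)*m := Nat.mul_le_mul_left _ hle
    omega
  · have h5 : (2*k+1)*(m+1) ≤ (2*k+1)*m' := Nat.mul_le_mul_left _ hlt
    have h6 : (2*k+1)*(m+1) = (2*k+1)*m + (2*k+1) := by ring
    omega

lemma decompN (k l n : ℕ) (hl : 1 ≤ l) (hn : l + 1 ≤ n) :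
    ∃ m i, 1 ≤ m ∧ i ≤ 2*k ∧ n = fIdx k l m + i ∧ m < n := by
  refine ⟨(n-l-1) / (2*k+1) + 1, (n-l-1) % (2*k+1), Nat.le_add_left 1 _, ?_, ?_, ?_⟩
  · have := Nat.mod_lt (n-l-1) (y := 2*k+1) (by omega)
    omega
  · have h0 := Nat.div_add_mod (n-l-1) (2*k+1)
    unfold fIdx
    have h1 : (2*k+1) * ((n-l-1)/(2*k+1)+1) = (2*k+1)*((n-l-1)/(2*k+1)) + 2*k+1 := by ring
    omega
  · have : (n-l-1) / (2*k+1) ≤ n-l-1 := Nat.div_le_self _ _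
    omega

lemma memE_facts {p t k : ℕ} (hp : p.Prime) (hodd : p ≠ 2) (hk : memE p t k) :
    1 ≤ k ∧ ¬ p ∣ 2 * k ∧ ¬ p ∣ Nat.choose (2 * k) k := by
  obtain ⟨m, μ, hm1, hm2, hμ, hkeq⟩ := hk
  have hp2 : 2 < p := by
    rcases hp.two_le.lt_or_eq with h | h
    · exact h
    · exact absurd h.symm hodd
  have hpodd : Odd p := hp.odd_of_ne_two hodd
  have h2m : 2 * m ≤ p - 1 := by omega
  have hpμodd : ∀ j : ℕ, Odd (p ^ j) := fun j => hpodd.pow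
  obtain ⟨c, hc⟩ := hpμodd μ
  rw [hc] at hkeq
  have hkc : k = m * (2 * c + 1) + c := by omega
  have h2k1 : 2 * k + 1 = (2 * m + 1) * p ^ μ := by rw [hc, hkc]; ring
  have hk1 : 1 ≤ k := by nlinarith
  -- the key digit fact
  have hdigit : ∀ i : ℕ, 1 ≤ i → 2 * (k % p ^ i) < p ^ i := by
    intro i hi
    rcases le_or_gt i μ with hle | hlt
    · -- i ≤ μ
      have hPQ : p ^ μ = p ^ i * p ^ (μ - i) := by rw [← pow_add]; congr 1; omega
      obtain ⟨b, hb⟩ := hpμodd i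
      obtain ⟨d, hd⟩ := hpμodd (μ - i)
      have hc2 : 2*c+1 = (2*b+1)*(2*d+1) := by rw [← hb, ← hd, ← hPQ, hc]
      have hexp : (2*b+1)*(2*d+1) = 4*(b*d)+2*b+2*d+1 := by ring
      have hcval : c = 2*(b*d)+b+d := by omega
      have hk2 : k = b + p ^ i * (d + m * p ^ (μ - i)) := by
        rw [hb, hd, hkc, hcval]; ring
      rw [hk2, Nat.add_mul_mod_self_left, Nat.mod_eq_of_lt (by omega)]
      omega
    · -- μ < i : 2k < p^i
      have h1 : (2*m+1) * p ^ μ ≤ p * p ^ μ := Nat.mul_le_mul_right _ (by omega)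
      have h2 : p * p ^ μ = p ^ (μ + 1) := by rw [pow_succ]; ring
      have h3 : p ^ (μ + 1) ≤ p ^ i := Nat.pow_le_pow_right (by omega) (by omega)
      have hk3 : 2 * k < p ^ i := by omega
      rw [Nat.mod_eq_of_lt (by omega)]
      omega
  refine ⟨hk1, ?_, ?_⟩
  · rcases Nat.eq_zero_or_pos μ with hμ0 | hμpos
    · subst hμ0
      simp only [pow_zero, mul_one] at h2k1
      intro hdvd
      have := Nat.le_of_dvd (by omega) hdvd
      omega
    · intro hdvd
      have hdvd1 : p ∣ 2 * k + 1 := by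
        rw [h2k1]; exact Dvd.dvd.mul_left (dvd_pow_self p (by omega)) _
      have h1 : p ∣ 1 := by
        have := Nat.dvd_sub hdvd1 hdvd
        simpa using this
      have := Nat.le_of_dvd one_pos h1
      omega
  · -- ¬ p ∣ choose (2k) k
    haveI : Fact p.Prime := ⟨hp⟩
    have hval : padicValNat p (Nat.choose (2*k) k) = 0 := by
      rw [padicValNat_choose (k := k) (n := 2*k) (b := Nat.log p (2*k) + 1)
        (by omega) (Nat.lt_succ_self _)]
      rw [Finset.card_eq_zero, Finset.filter_eq_empty_iff]
      intro i hi
      simp only [Finset.mem_Ico] at hi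
      have := hdigit i hi.1
      have h1 : 2 * k - k = k := by omega
      rw [h1]
      omega
    intro hdvd
    have := padicValNat.eq_zero_iff.mp hval
    rcases this with h | h | h
    · omega
    · exact absurd h (Nat.choose_pos (by omega)).ne'
    · exact h hdvd


lemma ratCast_int_div {K : Type*} [Field K] (q : ℚ) (a b : ℤ) (hq : q = (a : ℚ) / (b : ℚ))
    (hb : ((b : K)) ≠ 0) : (q : K) = (a : K) / (b : K) := by
  have hb0 : b ≠ 0 := by rintro rfl; simp at hb
  have hbQ : (b : ℚ) ≠ 0 := Int.cast_ne_zero.mpr hb0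
  have hq' : q = Rat.divInt a b := by rw [hq, Rat.divInt_eq_div]
  have hdvd : (q.den : ℤ) ∣ b := hq' ▸ Rat.den_dvd a b
  have hdenK : ((q.den : K)) ≠ 0 := by
    intro h0
    obtain ⟨c, hc⟩ := hdvd
    apply hb
    have : (b : K) = (q.den : K) * (c : K) := by exact_mod_cast congrArg (fun z : ℤ => (z : K)) hc
    rw [this, h0, zero_mul]
  have hdenQ : ((q.den : ℚ)) ≠ 0 := Nat.cast_ne_zero.mpr q.den_nz
  have cross : q.num * b = a * q.den := by
    have h1 : (q.num : ℚ) / (q.den : ℚ) = (a : ℚ) / (b : ℚ) := by rw [Rat.num_div_den, hq]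
    rw [div_eq_div_iff hdenQ hbQ] at h1
    exact_mod_cast h1
  rw [Rat.cast_def, div_eq_div_iff hdenK hb]
  exact_mod_cast congrArg (fun z : ℤ => (z : K)) cross


lemma charP_of_card {p s : ℕ} (hp : p.Prime) (hs : 1 ≤ s) (Fq : Type*) [Field Fq] [Fintype Fq]
    (hq : Fintype.card Fq = p ^ s) : CharP Fq p := by
  have h0 : ((p : Fq)) ^ s = 0 := by
    have := FiniteField.cast_card_eq_zero Fq
    rw [hq] at this
    push_cast at this
    exact this
  have hp0 : (p : Fq) = 0 := pow_eq_zero_iff (by omega) |>.mp h0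
  haveI := ringChar.charP Fq
  have hdvd : ringChar Fq ∣ p := (ringChar.dvd hp0)
  have hpr : (ringChar Fq).Prime := CharP.char_is_prime Fq _
  have : ringChar Fq = p := ((Nat.Prime.eq_one_or_self_of_dvd hp _ hdvd).resolve_left hpr.ne_one)
  exact this ▸ ringChar.charP Fq

lemma frob_nat (p : ℕ) [Fact p.Prime] {Fq : Type*} [Field Fq] [CharP Fq p] (t n : ℕ) :
    ((n : Fq)) ^ (p ^ t) = (n : Fq) := by
  have := map_natCast (iterateFrobenius Fq p t) n
  rwa [iterateFrobenius_def] at this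

lemma frob_rat (p : ℕ) [Fact p.Prime] {Fq : Type*} [Field Fq] [CharP Fq p] (t : ℕ) (q : ℚ) :
    ((q : Fq)) ^ (p ^ t) = (q : Fq) := by
  have := map_ratCast (iterateFrobenius Fq p t) q
  rwa [iterateFrobenius_def] at this

lemma two_ne (p : ℕ) (hp : p.Prime) (hodd : p ≠ 2) (Fq : Type*) [Field Fq] [CharP Fq p] :
    (2 : Fq) ≠ 0 := by
  intro h
  have h2 : ((2 : ℕ) : Fq) = 0 := by exact_mod_cast h
  have := (CharP.cast_eq_zero_iff Fq p 2).mp h2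
  have := Nat.le_of_dvd (by norm_num) this
  have := hp.two_le
  omega

lemma twok_ne (p : ℕ) (hp : p.Prime) (h2k : ¬ p ∣ 2 * k) (Fq : Type*) [Field Fq] [CharP Fq p] :
    (2 * (k : Fq)) ≠ 0 := by
  intro h
  exact h2k ((CharP.cast_eq_zero_iff Fq p (2*k)).mp (by push_cast; exact h))

lemma choose_ne (p k : ℕ) (hch : ¬ p ∣ Nat.choose (2 * k) k) (Fq : Type*) [Field Fq]
    [CharP Fq p] : ((Nat.choose (2*k) k : Fq)) ≠ 0 := by
  intro h
  exact hch ((CharP.cast_eq_zero_iff Fq p _).mp h)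

lemma thF_eq (p k : ℕ) (hp : p.Prime) (hodd : p ≠ 2) (Fq : Type*) [Field Fq] [CharP Fq p] :
    thF Fq k = (((-1)^k * (Nat.choose (2*k) k) : ℤ) : Fq) / ((2:Fq)^(2*k)) := by
  have h1 : thetaRat k = (((-1)^k * (Nat.choose (2*k) k) : ℤ) : ℚ) / (((2^(2*k) : ℤ)) : ℚ) := by
    unfold thetaRat; push_cast; ring
  rw [thF, ratCast_int_div _ _ _ h1 (by push_cast; exact pow_ne_zero _ (two_ne p hp hodd Fq))]
  push_cast
  ring

lemma thF_ne (p k : ℕ) (hp : p.Prime) (hodd : p ≠ 2) (hch : ¬ p ∣ Nat.choose (2 * k) k)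
    (Fq : Type*) [Field Fq] [CharP Fq p] : thF Fq k ≠ 0 := by
  rw [thF_eq p k hp hodd]
  apply div_ne_zero
  · push_cast
    intro h
    rcases mul_eq_zero.mp h with h | h
    · exact pow_ne_zero k (neg_ne_zero.mpr (one_ne_zero : (1:Fq) ≠ 0)) h
    · exact choose_ne p k hch Fq h
  · exact pow_ne_zero _ (two_ne p hp hodd Fq)

lemma omF_eq (p k : ℕ) (hp : p.Prime) (hodd : p ≠ 2) (h2k : ¬ p ∣ 2 * k)
    (hch : ¬ p ∣ Nat.choose (2 * k) k) (hk1 : 1 ≤ k) (Fq : Type*) [Field Fq] [CharP Fq p] :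
    omF Fq k = -((2 * (k : Fq)) * thF Fq k)⁻¹ ^ 2 := by
  set c := Nat.choose (2*k) k with hc
  have hcQ : ((c : ℚ)) ≠ 0 := Nat.cast_ne_zero.mpr (Nat.choose_pos (by omega)).ne'
  have hkQ : ((k : ℚ)) ≠ 0 := Nat.cast_ne_zero.mpr (by omega)
  have h1 : omegaRat k = (((-(2^(4*k)) : ℤ)) : ℚ) / ((((2*k*c)^2 : ℤ)) : ℚ) := by
    unfold omegaRat thetaRat
    rw [← hc]
    have h2Q : ((2:ℚ))^(2*k) ≠ 0 := by positivity
    push_cast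
    field_simp
    ring_nf
    rw [mul_comm k 2, show ((-1:ℚ))^(2*k) = 1 from Even.neg_one_pow (even_two_mul k)]
    ring
  have hden : ((((2*k*c)^2 : ℤ) : Fq)) ≠ 0 := by
    push_cast
    apply pow_ne_zero
    apply mul_ne_zero
    · have := twok_ne p hp h2k Fq (k := k); push_cast at this ⊢; exact this
    · exact choose_ne p k hch Fq
  rw [omF, ratCast_int_div _ _ _ h1 hden, thF_eq p k hp hodd]
  have h2 : (2:Fq) ≠ 0 := two_ne p hp hodd Fq
  have hkF : ((2 * (k:Fq))) ≠ 0 := twok_ne p hp h2k Fq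
  have hcF : ((c:Fq)) ≠ 0 := choose_ne p k hch Fq
  have hsq : ((-1 : Fq)^k)^2 = 1 := by
    rw [← pow_mul, mul_comm, pow_mul, neg_one_sq, one_pow]
  push_cast
  field_simp
  ring_nf
  rw [mul_comm k 2, show ((-1:Fq))^(2*k) = 1 from Even.neg_one_pow (even_two_mul k)]
  rw [← hc]
  field_simp

/-- Lemma 5.2: given sequences `(λ_n)`, `(δ_n)` in `F_q*` satisfying `(LD)`, the
recursion `(D₁)` holds for all `n ≥ 1` if and only if `(II₀)`, `(D₂)` and `(D₃)` hold. -/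
theorem statement9 (p s t : ℕ) (hp : p.Prime) (hodd : p ≠ 2) (hs : 1 ≤ s) (ht : 1 ≤ t)
    (Fq : Type*) [Field Fq] [Fintype Fq] (hq : Fintype.card Fq = p ^ s)
    (k : ℕ) (hk : memE p t k) (l : ℕ) (hl : 1 ≤ l)
    (e1 : Fq) (he1 : e1 ≠ 0)
    (lam δ : ℕ → Fq) (hlam : ∀ n, 1 ≤ n → lam n ≠ 0) (hδ : ∀ n, δ n ≠ 0)
    (hLD1 : ∀ n, 1 ≤ n → lam (fIdx k l n) = e1 ^ ((-1 : ℤ) ^ n) * lam n ^ (p ^ t))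
    (hLD2 : ∀ n, 1 ≤ n → ∀ i, 1 ≤ i → i ≤ 2 * k →
      lam (fIdx k l n + i) =
        -vF Fq k i * e1 ^ ((-1 : ℤ) ^ (n + i)) * δ n ^ ((-1 : ℤ) ^ i)) :
    (∀ n, 1 ≤ n →
        δ n = 2 * (k : Fq) * thF Fq k ^ iIdx k l n * lam n ^ (p ^ t) -
          (omF Fq k * δ (n - 1))⁻¹) ↔
    ((∀ n, 1 ≤ n → n ≤ l →
        δ n = 2 * (k : Fq) * thF Fq k * lam n ^ (p ^ t) +
          (2 * (k : Fq) * thF Fq k) ^ 2 * (δ (n - 1))⁻¹) ∧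
      (∀ n, 1 ≤ n →
        δ (fIdx k l n) + (omF Fq k * δ (fIdx k l n - 1))⁻¹ =
          thF Fq k * e1 ^ ((p ^ t : ℤ) * (-1) ^ n) *
            (δ n ^ (p ^ t) + (omF Fq k * δ (n - 1)) ^ (-(p ^ t : ℤ)))) ∧
      (∀ n, 1 ≤ n → ∀ i, 1 ≤ i → i ≤ 2 * k →
        δ (fIdx k l n + i) + (omF Fq k * δ (fIdx k l n + i - 1))⁻¹ =
          -(2 * (k : Fq) * thF Fq k) * vF Fq k i * e1 ^ ((p ^ t : ℤ) * (-1) ^ (n + i)) *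
            δ n ^ ((p ^ t : ℤ) * (-1) ^ i))) := by
  obtain ⟨hk1, h2k, hch⟩ := memE_facts hp hodd hk
  haveI : Fact p.Prime := ⟨hp⟩
  haveI : CharP Fq p := charP_of_card hp hs Fq hq
  have hθ : thF Fq k ≠ 0 := thF_ne p k hp hodd hch Fq
  have hw : (2 * (k : Fq)) * thF Fq k ≠ 0 := mul_ne_zero (twok_ne p hp h2k Fq) hθ
  have hsinv : ∀ x : Fq, (omF Fq k * x)⁻¹ = -((2 * (k : Fq) * thF Fq k) ^ 2 * x⁻¹) := by
    intro x
    rw [mul_inv, omF_eq p k hp hodd h2k hch hk1 Fq, inv_neg, inv_pow, inv_inv]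
    ring
  have hfrat : ∀ q : ℚ, ((q : Fq)) ^ (p ^ t) = (q : Fq) := frob_rat p t
  have hθq : (thF Fq k) ^ (p ^ t) = thF Fq k := hfrat (thetaRat k)
  have hfix : ∀ j : ℕ, (2 * (k : Fq) * thF Fq k ^ j) ^ (p ^ t)
      = 2 * (k : Fq) * thF Fq k ^ j := by
    intro j
    have h2 : ((2 : Fq)) ^ (p ^ t) = 2 := by
      have := frob_nat p t (Fq := Fq) 2; push_cast at this; exact this
    have hk' : (((k : ℕ) : Fq)) ^ (p ^ t) = ((k : ℕ) : Fq) := frob_nat p t k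
    rw [mul_pow, mul_pow, h2, hk', pow_right_comm, hθq]
  have hcast : ((p : ℤ)) ^ t = ((p ^ t : ℕ) : ℤ) := by push_cast; ring
  have hzp : ∀ (x : Fq) (a : ℤ), (x ^ a) ^ (p ^ t) = x ^ ((p ^ t : ℤ) * a) := by
    intro x a
    rw [← zpow_natCast (x ^ a) (p ^ t), ← zpow_mul, mul_comm, hcast]
  have hnegz : ∀ x : Fq, x ^ (-(p ^ t : ℤ)) = (x⁻¹) ^ (p ^ t) := by
    intro x
    rw [hcast, zpow_neg, zpow_natCast, inv_pow]
  have hD1iff : ∀ n : ℕ,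
      (δ n = 2 * (k : Fq) * thF Fq k ^ iIdx k l n * lam n ^ (p ^ t) -
        (omF Fq k * δ (n - 1))⁻¹) ↔
      (δ n + (omF Fq k * δ (n - 1))⁻¹ =
        2 * (k : Fq) * thF Fq k ^ iIdx k l n * lam n ^ (p ^ t)) :=
    fun n => eq_sub_iff_add_eq
  have hfrobS : ∀ n : ℕ,
      δ n + (omF Fq k * δ (n - 1))⁻¹ =
        2 * (k : Fq) * thF Fq k ^ iIdx k l n * lam n ^ (p ^ t) →
      δ n ^ (p ^ t) + (omF Fq k * δ (n - 1)) ^ (-(p ^ t : ℤ)) =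
        2 * (k : Fq) * thF Fq k ^ iIdx k l n * (lam n ^ (p ^ t)) ^ (p ^ t) := by
    intro n h
    rw [hnegz, ← add_pow_char_pow, h, mul_pow, hfix]
  have hII0iff : ∀ n, 1 ≤ n → n ≤ l →
      ((δ n = 2 * (k : Fq) * thF Fq k ^ iIdx k l n * lam n ^ (p ^ t) -
          (omF Fq k * δ (n - 1))⁻¹) ↔
       (δ n = 2 * (k : Fq) * thF Fq k * lam n ^ (p ^ t) +
          (2 * (k : Fq) * thF Fq k) ^ 2 * (δ (n - 1))⁻¹)) := by
    intro n hn hnl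
    rw [iIdx_eq_one k l n (fun m' hm' => not_fIdx_of_le k l n hnl m' hm'), pow_one,
      hsinv, sub_neg_eq_add]
  have hD2iff : ∀ n, 1 ≤ n →
      δ n + (omF Fq k * δ (n - 1))⁻¹ =
        2 * (k : Fq) * thF Fq k ^ iIdx k l n * lam n ^ (p ^ t) →
      ((δ (fIdx k l n) + (omF Fq k * δ (fIdx k l n - 1))⁻¹ =
          thF Fq k * e1 ^ ((p ^ t : ℤ) * (-1) ^ n) *
            (δ n ^ (p ^ t) + (omF Fq k * δ (n - 1)) ^ (-(p ^ t : ℤ)))) ↔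
       (δ (fIdx k l n) + (omF Fq k * δ (fIdx k l n - 1))⁻¹ =
          2 * (k : Fq) * thF Fq k ^ iIdx k l (fIdx k l n) * lam (fIdx k l n) ^ (p ^ t))) := by
    intro n hn hS
    rw [hfrobS n hS, iIdx_fIdx k l n hl hn, hLD1 n hn, mul_pow, hzp e1 ((-1) ^ n), pow_succ]
    constructor <;> intro h2 <;> rw [h2] <;> ring
  have hoddq : Odd (p ^ t) := (hp.odd_of_ne_two hodd).pow
  have hD3iff : ∀ n, 1 ≤ n → ∀ i, 1 ≤ i → i ≤ 2 * k →
      ((δ (fIdx k l n + i) + (omF Fq k * δ (fIdx k l n + i - 1))⁻¹ =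
          -(2 * (k : Fq) * thF Fq k) * vF Fq k i * e1 ^ ((p ^ t : ℤ) * (-1) ^ (n + i)) *
            δ n ^ ((p ^ t : ℤ) * (-1) ^ i)) ↔
       (δ (fIdx k l n + i) + (omF Fq k * δ (fIdx k l n + i - 1))⁻¹ =
          2 * (k : Fq) * thF Fq k ^ iIdx k l (fIdx k l n + i) *
            lam (fIdx k l n + i) ^ (p ^ t))) := by
    intro n hn i hi hik
    have hvq : (vF Fq k i) ^ (p ^ t) = vF Fq k i := hfrat (vRat k i)
    rw [iIdx_eq_one k l _ (fun m' hm' => not_fIdx_add k l n i hk1 hn hi hik m' hm'), pow_one,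
      hLD2 n hn i hi hik, mul_pow, mul_pow, hoddq.neg_pow, hvq,
      hzp e1 ((-1) ^ (n + i)), hzp (δ n) ((-1) ^ i)]
    constructor <;> intro h2 <;> rw [h2] <;> ring
  constructor
  · intro hD1
    refine ⟨fun n hn hnl => (hII0iff n hn hnl).mp (hD1 n hn), fun n hn => ?_,
      fun n hn i hi hik => ?_⟩
    · have hfn : 1 ≤ fIdx k l n := le_of_lt (lt_of_le_of_lt hn (fIdx_lt k l n hl hn))
      exact (hD2iff n hn ((hD1iff n).mp (hD1 n hn))).mpr ((hD1iff (fIdx k l n)).mp (hD1 _ hfn))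
    · have hfn : 1 ≤ fIdx k l n + i := by
        have := fIdx_lt k l n hl hn; omega
      exact (hD3iff n hn i hi hik).mpr ((hD1iff _).mp (hD1 _ hfn))
  · rintro ⟨h0, h2, h3⟩
    intro n
    induction n using Nat.strong_induction_on with
    | _ n ih =>
      intro hn
      rcases le_or_gt n l with hle | hgt
      · exact (hII0iff n hn hle).mpr (h0 n hn hle)
      · obtain ⟨m, i, hm1, hik, hneq, hmn⟩ := decompN k l n hl hgt
        subst hneq
        rcases Nat.eq_zero_or_pos i with rfl | hi
        · rw [add_zero] at hmn ⊢
          have hSm := (hD1iff m).mp (ih m hmn hm1)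
          exact (hD1iff _).mpr ((hD2iff m hm1 hSm).mp (h2 m hm1))
        · exact (hD1iff _).mpr ((hD3iff m hm1 i hi hik).mp (h3 m hm1 i hi hik))
end
end

section
/- Let u ∈ F_27 be a root of the polynomial X³ + X² − X + 1, irreducible over F_3. Then the algebraic equation X⁴ − TX³ − u³TX + uT² − u⁶ = 0, with coefficients in F_27[T], has exactly one root α in F(27) = F_27((T^{−1})), and this root satisfies |α| = |T|. -/
open Polynomial

noncomputable section

lemma ps_mem_span_pow {F : Type*} [Field F] {x : PowerSeries F} {n : ℕ} :
    x ∈ (Ideal.span {(PowerSeries.X : PowerSeries F)}) ^ n ↔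
      ∀ m, m < n → PowerSeries.coeff m x = 0 := by
  rw [Ideal.span_singleton_pow, Ideal.mem_span_singleton, PowerSeries.X_pow_dvd_iff]

lemma ps_smul_top (F : Type*) [Field F] (n : ℕ) :
    ((Ideal.span {(PowerSeries.X : PowerSeries F)}) ^ n • ⊤ :
        Submodule (PowerSeries F) (PowerSeries F))
      = (Ideal.span {(PowerSeries.X : PowerSeries F)}) ^ n := by
  rw [Ideal.smul_eq_mul, Ideal.mul_top]

lemma psIsAdicComplete (F : Type*) [Field F] :
    IsAdicComplete (Ideal.span {(PowerSeries.X : PowerSeries F)}) (PowerSeries F) := by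
  refine { toIsHausdorff := ⟨fun x hx => ?_⟩, toIsPrecomplete := ⟨fun f hf => ?_⟩ }
  · ext n
    have := hx (n + 1)
    rw [SModEq.zero, ps_smul_top, ps_mem_span_pow] at this
    simpa using this n (by omega)
  · refine ⟨PowerSeries.mk fun n => PowerSeries.coeff n (f (n + 1)), fun n => ?_⟩
    rw [SModEq.sub_mem, ps_smul_top, ps_mem_span_pow]
    intro m hm
    have h2 := hf (show m + 1 ≤ n from hm)
    rw [SModEq.sub_mem, ps_smul_top, ps_mem_span_pow] at h2
    have h3 := h2 m (by omega)
    simp only [map_sub, sub_eq_zero] at h3 ⊢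
    rw [PowerSeries.coeff_mk, h3]

lemma hensel_root (F : Type*) [Field F] (u : F) :
    ∃ a : PowerSeries F,
      a ^ 4 - a ^ 3 - PowerSeries.C (u ^ 3) * PowerSeries.X ^ 2 * a
        + PowerSeries.C u * PowerSeries.X ^ 2
        - PowerSeries.C (u ^ 6) * PowerSeries.X ^ 4 = 0 ∧
      PowerSeries.constantCoeff a = 1 := by
  haveI := psIsAdicComplete F
  set R := PowerSeries F
  set I : Ideal R := Ideal.span {(PowerSeries.X : R)} with hI
  set p : R[X] := X ^ 4 - X ^ 3 - C (PowerSeries.C (u ^ 3) * PowerSeries.X ^ 2) * X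
      + C (PowerSeries.C u * PowerSeries.X ^ 2
        - PowerSeries.C (u ^ 6) * PowerSeries.X ^ 4) with hp
  have hmonic : p.Monic := by
    have : p = X ^ 4 + (- (X ^ 3) - C (PowerSeries.C (u ^ 3) * PowerSeries.X ^ 2) * X
        + C (PowerSeries.C u * PowerSeries.X ^ 2
          - PowerSeries.C (u ^ 6) * PowerSeries.X ^ 4)) := by ring
    rw [this]
    apply monic_X_pow_add
    refine lt_of_le_of_lt ?_ (show ((3:ℕ) : WithBot ℕ) < ((4:ℕ) : WithBot ℕ) by
      exact_mod_cast by norm_num)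
    compute_degree
    exact le_refl _
  have heval : p.eval 1 ∈ I := by
    have : p.eval 1 = PowerSeries.X * ((PowerSeries.C u - PowerSeries.C (u ^ 3)) *
        PowerSeries.X - PowerSeries.C (u ^ 6) * PowerSeries.X ^ 3) := by
      simp [hp]; ring
    rw [this, hI, Ideal.mem_span_singleton]
    exact Dvd.intro _ rfl
  have hXmem : (PowerSeries.X : R) ∈ I := Ideal.subset_span rfl
  have hderiv : IsUnit (Ideal.Quotient.mk I (p.derivative.eval 1)) := by
    have hd : p.derivative = C 4 * X ^ 3 - C 3 * X ^ 2
        - C (PowerSeries.C (u ^ 3) * PowerSeries.X ^ 2) := by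
      rw [hp]
      simp only [derivative_add, derivative_sub, derivative_mul, derivative_C,
        derivative_X, derivative_X_pow]
      push_cast
      ring
    have h1 : p.derivative.eval 1
        = 1 - PowerSeries.C (u ^ 3) * PowerSeries.X ^ 2 := by
      rw [hd]
      simp only [eval_sub, eval_mul, eval_pow, eval_X, eval_C]
      norm_num
    have h2 : Ideal.Quotient.mk I (p.derivative.eval 1) = 1 := by
      rw [h1, map_sub, map_one]
      have : Ideal.Quotient.mk I (PowerSeries.C (u ^ 3) * PowerSeries.X ^ 2) = 0 := by
        rw [Ideal.Quotient.eq_zero_iff_mem]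
        exact Ideal.mul_mem_left _ _ (Ideal.pow_mem_of_mem I hXmem 2 (by norm_num))
      rw [this, sub_zero]
    rw [h2]; exact isUnit_one
  obtain ⟨a, ha, ha1⟩ := HenselianRing.is_henselian (I := I) p hmonic 1 heval hderiv
  refine ⟨a, ?_, ?_⟩
  · have := ha
    simp only [IsRoot, hp, eval_add, eval_sub, eval_mul, eval_pow, eval_X, eval_C] at this
    linear_combination this
  · rw [hI, Ideal.mem_span_singleton, PowerSeries.X_dvd_iff, map_sub, map_one,
      sub_eq_zero] at ha1
    exact ha1

lemma ps_unique {F : Type*} [Field F] {u : F} (hu0 : u ≠ 0)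
    {a w : PowerSeries F}
    (ha : a ^ 4 - a ^ 3 - PowerSeries.C (u ^ 3) * PowerSeries.X ^ 2 * a
        + PowerSeries.C u * PowerSeries.X ^ 2
        - PowerSeries.C (u ^ 6) * PowerSeries.X ^ 4 = 0)
    (ha1 : PowerSeries.constantCoeff a = 1)
    (hw : w ^ 4 - w ^ 3 - PowerSeries.C (u ^ 3) * PowerSeries.X ^ 2 * w
        + PowerSeries.C u * PowerSeries.X ^ 2
        - PowerSeries.C (u ^ 6) * PowerSeries.X ^ 4 = 0) :
    w = a := by
  have hcc : (PowerSeries.constantCoeff w) ^ 3 * (PowerSeries.constantCoeff w - 1) = 0 := by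
    have := congrArg (PowerSeries.constantCoeff (R := F)) hw
    simp only [map_sub, map_add, map_mul, map_pow, PowerSeries.constantCoeff_X,
      PowerSeries.constantCoeff_C, map_zero] at this
    linear_combination this
  rcases mul_eq_zero.mp hcc with h0 | h1
  · -- constant coefficient 0 : contradiction via coefficient of X^2
    exfalso
    have hc0 : PowerSeries.constantCoeff w = 0 := pow_eq_zero_iff (by norm_num) |>.mp h0
    obtain ⟨w', hw'⟩ := PowerSeries.X_dvd_iff.mpr hc0
    have h2 := congrArg (PowerSeries.coeff 2) hw
    have k4 : PowerSeries.coeff 2 (w ^ 4) = 0 :=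
      (PowerSeries.X_pow_dvd_iff (n := 4)).mp ⟨w' ^ 4, by rw [hw']; ring⟩ 2 (by norm_num)
    have k3 : PowerSeries.coeff 2 (w ^ 3) = 0 :=
      (PowerSeries.X_pow_dvd_iff (n := 3)).mp ⟨w' ^ 3, by rw [hw']; ring⟩ 2 (by norm_num)
    have k1 : PowerSeries.coeff 2
        (PowerSeries.C (u ^ 3) * PowerSeries.X ^ 2 * w) = 0 :=
      (PowerSeries.X_pow_dvd_iff (n := 3)).mp
        ⟨PowerSeries.C (u ^ 3) * w', by rw [hw']; ring⟩ 2 (by norm_num)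
    have k2 : PowerSeries.coeff 2 (PowerSeries.C u * PowerSeries.X ^ 2) = u := by
      simp [PowerSeries.coeff_X_pow]
    have k0 : PowerSeries.coeff 2 (PowerSeries.C (u ^ 6) * PowerSeries.X ^ 4) = 0 := by
      rw [PowerSeries.coeff_C_mul]
      simp [PowerSeries.coeff_X_pow]
    simp only [map_sub, map_add, map_zero] at h2
    rw [k4, k3, k1, k2, k0] at h2
    apply hu0
    linear_combination h2
  · -- constant coefficient 1 : uniqueness of the Hensel root
    have hc1 : PowerSeries.constantCoeff w = 1 := sub_eq_zero.mp h1
    have hdh : (w - a) * ((w ^ 3 + w ^ 2 * a + w * a ^ 2 + a ^ 3)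
        - (w ^ 2 + w * a + a ^ 2) - PowerSeries.C (u ^ 3) * PowerSeries.X ^ 2) = 0 := by
      linear_combination hw - ha
    have hh0 : PowerSeries.constantCoeff ((w ^ 3 + w ^ 2 * a + w * a ^ 2 + a ^ 3)
        - (w ^ 2 + w * a + a ^ 2) - PowerSeries.C (u ^ 3) * PowerSeries.X ^ 2) = 1 := by
      simp only [map_sub, map_add, map_mul, map_pow, PowerSeries.constantCoeff_X,
        PowerSeries.constantCoeff_C, ha1, hc1]
      norm_num
    have hne : ((w ^ 3 + w ^ 2 * a + w * a ^ 2 + a ^ 3)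
        - (w ^ 2 + w * a + a ^ 2) - PowerSeries.C (u ^ 3) * PowerSeries.X ^ 2) ≠ 0 := by
      intro e
      rw [e, map_zero] at hh0
      exact one_ne_zero hh0.symm
    have := (mul_eq_zero.mp hdh).resolve_right hne
    exact sub_eq_zero.mp this

/-- The element `T` of `F(q) = F_q((T⁻¹))`, realized as the Laurent series
(in the variable `T⁻¹`) of order `-1`. -/
def Tvar (Fq : Type*) [Field Fq] : LaurentSeries Fq := HahnSeries.single (-1 : ℤ) 1

/-- Corollary C (first part): with `F_27 = F_3(u)`, `u³ + u² - u + 1 = 0`, the equation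
`X⁴ - TX³ - u³TX + uT² - u⁶ = 0` has exactly one root `α` in `F(27) = F_27((T⁻¹))`, and
this root satisfies `|α| = |T|` (i.e. `α ≠ 0` and `ord(α) = -1`). -/



theorem statement17 (F : Type*) [Field F] [Fintype F] (hF : Fintype.card F = 27)
    (u : F) (hu : u ^ 3 + u ^ 2 - u + 1 = 0) :
    ∃ α : LaurentSeries F,
      (α ^ 4 - Tvar F * α ^ 3 -
          algebraMap F (LaurentSeries F) (u ^ 3) * Tvar F * α +
          algebraMap F (LaurentSeries F) u * Tvar F ^ 2 -
          algebraMap F (LaurentSeries F) (u ^ 6) = 0) ∧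
      α ≠ 0 ∧ α.order = -1 ∧
      ∀ β : LaurentSeries F,
        (β ^ 4 - Tvar F * β ^ 3 -
          algebraMap F (LaurentSeries F) (u ^ 3) * Tvar F * β +
          algebraMap F (LaurentSeries F) u * Tvar F ^ 2 -
          algebraMap F (LaurentSeries F) (u ^ 6) = 0) → β = α := by
  classical
  have hu0 : u ≠ 0 := by
    rintro rfl
    norm_num at hu
  obtain ⟨a, ha, ha1⟩ := hensel_root F u
  set T : LaurentSeries F := Tvar F with hT
  set t : LaurentSeries F := HahnSeries.single (1 : ℤ) 1 with ht
  set A := algebraMap F (LaurentSeries F) with hAdef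
  have hTt : T * t = 1 := by
    rw [hT, ht, Tvar, HahnSeries.single_mul_single]
    norm_num [HahnSeries.single_zero_one]
  set φ := HahnSeries.ofPowerSeries ℤ F with hφ
  have hA : ∀ c : F, A c = φ (PowerSeries.C c) := fun c => by
    rw [hφ, hAdef, HahnSeries.algebraMap_apply', PowerSeries.algebraMap_apply]
    simp
  have hφX : φ PowerSeries.X = t := HahnSeries.ofPowerSeries_X
  -- the root
  have ha0 : a ≠ 0 := fun e => by simp [e] at ha1
  have hy0 : φ a ≠ 0 := fun e => ha0 (HahnSeries.ofPowerSeries_injective (by rw [e, map_zero]))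
  have hT0 : T ≠ 0 := HahnSeries.single_ne_zero one_ne_zero
  have hy : (φ a) ^ 4 - (φ a) ^ 3 - A (u ^ 3) * t ^ 2 * (φ a)
      + A u * t ^ 2 - A (u ^ 6) * t ^ 4 = 0 := by
    have h0 := congrArg φ ha
    simp only [map_sub, map_add, map_mul, map_pow, map_zero, hφX] at h0
    rw [hA (u ^ 3), hA u, hA (u ^ 6)]
    simp only [map_pow]
    exact h0
  -- order of φ a
  have hyc0 : (φ a).coeff (0 : ℤ) = 1 := by
    rw [hφ]
    rw [show ((0:ℤ)) = ((0:ℕ) : ℤ) by norm_num]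
    rw [PowerSeries.coeff_coe]
    simpa using ha1
  have hyord : (φ a).order = 0 := by
    apply le_antisymm
    · exact HahnSeries.order_le_of_coeff_ne_zero (by rw [hyc0]; exact one_ne_zero)
    · by_contra hlt
      push_neg at hlt
      have h1 := HahnSeries.coeff_order_eq_zero.not.mpr hy0
      rw [hφ, PowerSeries.coeff_coe, if_pos (by rw [← hφ]; exact hlt)] at h1
      exact h1 rfl
  refine ⟨T * φ a, ?_, mul_ne_zero hT0 hy0, ?_, ?_⟩
  · linear_combination (T ^ 4) * hy +
      (A (u ^ 3) * (φ a) * T ^ 2 * (T * t + 1) - A u * T ^ 2 * (T * t + 1)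
        + A (u ^ 6) * (T * t + 1) * ((T * t) ^ 2 + 1)) * hTt
  · rw [HahnSeries.order_mul hT0 hy0, hyord, hT, Tvar, HahnSeries.order_single one_ne_zero]
    ring
  · intro β hβ
    set z : LaurentSeries F := t * β with hzdef
    have hz : z ^ 4 - z ^ 3 - A (u ^ 3) * t ^ 2 * z + A u * t ^ 2 - A (u ^ 6) * t ^ 4 = 0 := by
      rw [hzdef]
      linear_combination (t ^ 4) * hβ +
        (t ^ 3 * β ^ 3 + A (u ^ 3) * t ^ 3 * β - A u * t ^ 2 * (1 + t * T)) * hTt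
    have hβz : β = T * z := by
      rw [hzdef, ← mul_assoc, hTt, one_mul]
    -- z ≠ 0
    have hz0 : z ≠ 0 := by
      intro hzz
      rw [hzz] at hz
      have hz' : A u * t ^ 2 = A (u ^ 6) * t ^ 4 := by linear_combination hz
      rw [hA u, hA (u ^ 6), hφ, HahnSeries.ofPowerSeries_C, HahnSeries.ofPowerSeries_C,
        ht] at hz'
      rw [show (HahnSeries.C u : LaurentSeries F) * HahnSeries.single (1:ℤ) 1 ^ 2
          = HahnSeries.single (2:ℤ) u by
        rw [HahnSeries.single_pow, HahnSeries.C_apply, HahnSeries.single_mul_single]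
        norm_num] at hz'
      rw [show (HahnSeries.C (u^6) : LaurentSeries F) * HahnSeries.single (1:ℤ) 1 ^ 4
          = HahnSeries.single (4:ℤ) (u^6) by
        rw [HahnSeries.single_pow, HahnSeries.C_apply, HahnSeries.single_mul_single]
        norm_num] at hz'
      have h2 := congrArg (fun x : LaurentSeries F => x.coeff 2) hz'
      simp only [HahnSeries.coeff_single_same,
        HahnSeries.coeff_single_of_ne (show (2:ℤ) ≠ 4 by norm_num)] at h2
      exact hu0 h2
    -- singles
    have hsingle : ∀ (c : F) (n : ℕ), A c * t ^ n = HahnSeries.single (n : ℤ) c := by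
      intro c n
      rw [hA c, hφ, HahnSeries.ofPowerSeries_C, HahnSeries.C_apply, ht, HahnSeries.single_pow,
        HahnSeries.single_mul_single]
      norm_num
    -- 0 ≤ order z
    have hzord : 0 ≤ z.order := by
      by_contra hneg
      push_neg at hneg
      have heq : z ^ 4 = z ^ 3 + A (u ^ 3) * t ^ 2 * z - A u * t ^ 2 + A (u ^ 6) * t ^ 4 := by
        linear_combination hz
      have h4 : (z ^ 4).order = 4 * z.order := by
        rw [HahnSeries.order_pow]
        push_cast [nsmul_eq_mul]
        ring
      have hc := HahnSeries.coeff_order_eq_zero.not.mpr (pow_ne_zero 4 hz0)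
      rw [h4] at hc
      apply hc
      rw [heq]
      have c3 : (z ^ 3).coeff (4 * z.order) = 0 := by
        apply HahnSeries.coeff_eq_zero_of_lt_order
        rw [HahnSeries.order_pow]
        push_cast [nsmul_eq_mul]
        linarith
      have cmid : (A (u ^ 3) * t ^ 2 * z).coeff (4 * z.order) = 0 := by
        apply HahnSeries.coeff_eq_zero_of_lt_order
        rw [hsingle (u ^ 3) 2,
          HahnSeries.order_mul (HahnSeries.single_ne_zero (pow_ne_zero 3 hu0)) hz0,
          HahnSeries.order_single (pow_ne_zero 3 hu0)]
        push_cast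
        linarith
      have c2 : (A u * t ^ 2).coeff (4 * z.order) = 0 := by
        apply HahnSeries.coeff_eq_zero_of_lt_order
        rw [hsingle u 2, HahnSeries.order_single hu0]
        push_cast
        linarith
      have c4 : (A (u ^ 6) * t ^ 4).coeff (4 * z.order) = 0 := by
        apply HahnSeries.coeff_eq_zero_of_lt_order
        rw [hsingle (u ^ 6) 4, HahnSeries.order_single (pow_ne_zero 6 hu0)]
        push_cast
        linarith
      rw [HahnSeries.coeff_add, HahnSeries.coeff_sub, HahnSeries.coeff_add, c3, cmid, c2, c4]
      ring
    -- z comes from a power series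
    have hn : ((z.order.toNat : ℕ) : ℤ) = z.order := Int.toNat_of_nonneg hzord
    set w : PowerSeries F := PowerSeries.X ^ z.order.toNat * z.powerSeriesPart with hwdef
    have hwz : φ w = z := by
      rw [hφ, hwdef]
      exact LaurentSeries.X_order_mul_powerSeriesPart hn
    have hweq : w ^ 4 - w ^ 3 - PowerSeries.C (u ^ 3) * PowerSeries.X ^ 2 * w
        + PowerSeries.C u * PowerSeries.X ^ 2
        - PowerSeries.C (u ^ 6) * PowerSeries.X ^ 4 = 0 := by
      have h0 : φ (w ^ 4 - w ^ 3 - PowerSeries.C (u ^ 3) * PowerSeries.X ^ 2 * w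
          + PowerSeries.C u * PowerSeries.X ^ 2
          - PowerSeries.C (u ^ 6) * PowerSeries.X ^ 4)
          = (φ w) ^ 4 - (φ w) ^ 3 - A (u ^ 3) * t ^ 2 * (φ w) + A u * t ^ 2
            - A (u ^ 6) * t ^ 4 := by
        simp only [map_sub, map_add, map_mul, map_pow, hφX]
        rw [hA u]
      apply HahnSeries.ofPowerSeries_injective (R := F) (Γ := ℤ)
      rw [map_zero, ← hφ, h0, hwz]
      exact hz
    have hwa := ps_unique hu0 ha ha1 hweq
    rw [hβz, ← hwz, hwa]
end
end

section
/- Let u ∈ F_27 be a root of the polynomial X³ + X² − X + 1, irreducible over F_3. Then there is a well-defined sequence (γ_n)_{n≥1} in F_27 with γ_1 = u satisfying γ_{3n−1} = γ_n³/(1+γ_n³), γ_{3n} = γ_n³/(1−γ_n⁶), γ_{3n+1} = γ_n³/(1−γ_n³) for all n ≥ 1; more precisely, for every n ≥ 1 one has γ_n ∉ F_3 (equivalently γ_n³ ≠ γ_n, i.e. γ_n has degree 3 over F_3), and in particular γ_n ≠ 0, 1 + γ_n³ ≠ 0, 1 − γ_n³ ≠ 0 and 1 − γ_n⁶ ≠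 0, so all the denominators in the recursion are nonzero and γ_n ∈ F_27* for all n. -/
open Polynomial

noncomputable section

noncomputable def gseq {F : Type*} [Field F] (u : F) (m : ℕ) : F :=
  if h : m ≤ 1 then (if m = 1 then u else 0)
  else
    let x := gseq u ((m + 1) / 3)
    if m % 3 = 2 then x ^ 3 / (1 + x ^ 3)
    else if m % 3 = 0 then x ^ 3 / (1 - x ^ 6)
    else x ^ 3 / (1 - x ^ 3)
termination_by m
decreasing_by omega

lemma gseq_step {F : Type*} [Field F] (u : F) (m : ℕ) (h : ¬ m ≤ 1) :
    gseq u m = (let x := gseq u ((m + 1) / 3);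
    if m % 3 = 2 then x ^ 3 / (1 + x ^ 3)
    else if m % 3 = 0 then x ^ 3 / (1 - x ^ 6)
    else x ^ 3 / (1 - x ^ 3)) := by
  rw [gseq]; simp [h]


lemma key27 {F : Type*} [Field F] (h3 : (3:F) = 0) (hc : ∀ x : F, x ^ 27 = x)
    {x : F} (hx : x ^ 3 ≠ x) :
    x ≠ 0 ∧ (1 + x ^ 3 ≠ 0) ∧ (1 - x ^ 3 ≠ 0) ∧ (1 - x ^ 6 ≠ 0) ∧
    (x^3/(1+x^3))^3 ≠ x^3/(1+x^3) ∧ (x^3/(1-x^6))^3 ≠ x^3/(1-x^6) ∧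
    (x^3/(1-x^3))^3 ≠ x^3/(1-x^3) := by
  have hx0 : x ≠ 0 := by rintro rfl; exact hx (by ring)
  have hp : 1 + x ^ 3 ≠ 0 := by
    intro h
    have h1 : (x + 1) ^ 3 = 0 := by linear_combination h + (x^2 + x) * h3
    have h2 : x = -1 := by
      have h' := pow_eq_zero_iff (n := 3) (by norm_num) |>.mp h1
      linear_combination h'
    exact hx (by rw [h2]; ring)
  have hm : 1 - x ^ 3 ≠ 0 := by
    intro h
    have h1 : (x - 1) ^ 3 = 0 := by linear_combination -h + (x - x^2) * h3
    have h2 : x = 1 := by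
      have h' := pow_eq_zero_iff (n := 3) (by norm_num) |>.mp h1
      linear_combination h'
    exact hx (by rw [h2]; ring)
  have h6 : 1 - x ^ 6 ≠ 0 := by
    intro h
    have : (1 - x^3) * (1 + x^3) = 0 := by linear_combination h
    rcases mul_eq_zero.mp this with h' | h'
    · exact hm h'
    · exact hp h'
  have hx3 : x ^ 3 ≠ 0 := pow_ne_zero 3 hx0
  have hx6 : x ^ 6 ≠ 1 := fun h => h6 (by rw [h]; ring)
  refine ⟨hx0, hp, hm, h6, ?_, ?_, ?_⟩
  · intro hy
    have hy' : (x^3)^3 * (1 + x^3) = x^3 * (1 + x^3)^3 := by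
      field_simp at hy
      linear_combination (x^3 * (1 + x^3)) * hy
    have h1 : x ^ 3 * (x ^ 6 - 1) = 0 := by
      linear_combination hy' + (x^9 + x^6) * h3
    rcases mul_eq_zero.mp h1 with h' | h'
    · exact hx3 h'
    · exact hx6 (by linear_combination h')
  · intro hy
    have hy' : (x^3)^3 * (1 - x^6) = x^3 * (1 - x^6)^3 := by
      field_simp at hy
      linear_combination (x^3 * (1 - x^6)) * hy
    have h1 : x ^ 3 * ((x ^ 6 - 1) * (x ^ 12 + 1)) = 0 := by
      linear_combination hy' + (x^15 - x^9) * h3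
    have h26 : x ^ 26 = 1 := by
      have := hc x
      have h27 : x ^ 26 * x = 1 * x := by rw [← pow_succ]; simpa using this
      exact mul_right_cancel₀ hx0 h27
    rcases mul_eq_zero.mp h1 with h' | h'
    · exact hx3 h'
    rcases mul_eq_zero.mp h' with h' | h'
    · exact hx6 (by linear_combination h')
    · -- x^12 = -1, so x^24 = 1, with x^26 = 1 get x^2 = 1
      have h24 : x ^ 24 = 1 := by
        have : x ^ 24 = (x ^ 12) ^ 2 := by ring
        rw [this]
        have h12 : x ^ 12 = -1 := by linear_combination h'
        rw [h12]; ring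
      have h2 : x ^ 2 = 1 := by
        have : x ^ 24 * x ^ 2 = 1 := by rw [← pow_add]; simpa using h26
        rw [h24, one_mul] at this; exact this
      have : (x - 1) * (x + 1) = 0 := by linear_combination h2
      rcases mul_eq_zero.mp this with h' | h'
      · refine hx ?_
        have hx1 : x = 1 := by linear_combination h'
        rw [hx1]; ring
      · refine hx ?_
        have hx1 : x = -1 := by linear_combination h'
        rw [hx1]; ring
  · intro hy
    have hy' : (x^3)^3 * (1 - x^3) = x^3 * (1 - x^3)^3 := by
      field_simp at hy
      linear_combination (x^3 * (1 - x^3)) * hy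
    have h1 : x ^ 3 * (x ^ 6 - 1) = 0 := by
      linear_combination hy' + (x^9 - x^6) * h3
    rcases mul_eq_zero.mp h1 with h' | h'
    · exact hx3 h'
    · exact hx6 (by linear_combination h')
/-- Corollary C (the sequence `(γ_n)`): with `F_27 = F_3(u)`, `u³ + u² - u + 1 = 0`,
there is a well-defined sequence `(γ_n)_{n≥1}` in `F_27` with `γ₁ = u` and
`γ_{3n-1} = γ_n³/(1+γ_n³)`, `γ_{3n} = γ_n³/(1-γ_n⁶)`, `γ_{3n+1} = γ_n³/(1-γ_n³)`;
moreover every `γ_n` has degree `3` over `F_3` (equivalently `γ_n³ ≠ γ_n`), so in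
particular all the denominators are nonzero and `γ_n ∈ F_27*`. -/
theorem statement18 (F : Type*) [Field F] [Fintype F] (hF : Fintype.card F = 27)
    (u : F) (hu : u ^ 3 + u ^ 2 - u + 1 = 0) :
    ∃ γ : ℕ → F, γ 1 = u ∧
      (∀ n, 1 ≤ n →
        γ (3 * n - 1) = γ n ^ 3 / (1 + γ n ^ 3) ∧
        γ (3 * n) = γ n ^ 3 / (1 - γ n ^ 6) ∧
        γ (3 * n + 1) = γ n ^ 3 / (1 - γ n ^ 3)) ∧
      (∀ n, 1 ≤ n → γ n ^ 3 ≠ γ n) ∧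
      (∀ n, 1 ≤ n →
        γ n ≠ 0 ∧ 1 + γ n ^ 3 ≠ 0 ∧ 1 - γ n ^ 3 ≠ 0 ∧ 1 - γ n ^ 6 ≠ 0) := by
  -- characteristic 3 facts
  have h27 : (27 : F) = 0 := by
    have := FiniteField.cast_card_eq_zero F
    rwa [hF] at this
  have h3 : (3 : F) = 0 := by
    have h3c : (3 : F) ^ 3 = 0 := by rw [← h27]; norm_num
    exact pow_eq_zero_iff (n := 3) (by norm_num) |>.mp h3c
  have hc : ∀ x : F, x ^ 27 = x := by
    intro x
    have := FiniteField.pow_card x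
    rwa [hF] at this
  -- base case: u^3 ≠ u
  have hu0 : u ≠ 0 := by
    rintro rfl
    simp at hu
  have hbase : u ^ 3 ≠ u := by
    intro h
    have h2 : u ^ 2 + 1 = 0 := by linear_combination hu - h
    have h2' : u * u ^ 2 = u * 1 := by linear_combination h
    have h2'' : u ^ 2 = 1 := mul_left_cancel₀ hu0 h2'
    have htwo : (2 : F) = 0 := by linear_combination h2 - h2''
    have : (1 : F) = 0 := by linear_combination h3 - htwo
    exact one_ne_zero this
  -- invariant by strong induction
  have main : ∀ m : ℕ, 1 ≤ m → (gseq u m) ^ 3 ≠ gseq u m := by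
    intro m
    induction m using Nat.strong_induction_on with
    | _ m ih =>
      intro hm
      rcases eq_or_lt_of_le hm with h1 | h1
      · have : gseq u 1 = u := by rw [gseq]; simp
        rw [← h1, this]
        exact hbase
      · -- m ≥ 2
        have hm2 : ¬ m ≤ 1 := by omega
        have hk1 : 1 ≤ (m + 1) / 3 := by omega
        have hklt : (m + 1) / 3 < m := by omega
        have hIH := ih _ hklt hk1
        obtain ⟨_, _, _, _, K1, K2, K3⟩ := key27 h3 hc hIH
        rw [gseq_step u m hm2]
        simp only
        rcases (by omega : m % 3 = 0 ∨ m % 3 = 1 ∨ m % 3 = 2) with h | h | h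
        · simp [h]; exact K2
        · simp [h]; exact K3
        · simp [h]; exact K1
  refine ⟨gseq u, by rw [gseq]; simp, ?_, main, ?_⟩
  · intro n hn
    have e2 : gseq u (3 * n - 1) = (gseq u n) ^ 3 / (1 + (gseq u n) ^ 3) := by
      rw [gseq_step u (3 * n - 1) (by omega)]
      have h1 : (3 * n - 1) % 3 = 2 := by omega
      have h2 : (3 * n - 1 + 1) / 3 = n := by omega
      simp [h1, h2]
    have e3 : gseq u (3 * n) = (gseq u n) ^ 3 / (1 - (gseq u n) ^ 6) := by
      rw [gseq_step u (3 * n) (by omega)]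
      have h1 : (3 * n) % 3 = 0 := by omega
      have h2 : (3 * n + 1) / 3 = n := by omega
      simp [h1, h2]
    have e4 : gseq u (3 * n + 1) = (gseq u n) ^ 3 / (1 - (gseq u n) ^ 3) := by
      rw [gseq_step u (3 * n + 1) (by omega)]
      have h1 : (3 * n + 1) % 3 = 1 := by omega
      have h2 : (3 * n + 1 + 1) / 3 = n := by omega
      simp [h1, h2]
    exact ⟨e2, e3, e4⟩
  · intro n hn
    obtain ⟨a, b, c, d, _, _, _⟩ := key27 h3 hc (main n hn)
    exact ⟨a, b, c, d⟩
end
end
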